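/- arXiv:2104.05867 — 4 statements merged into one kernel-verified Lean document; each statement's English description precedes it below -/
import Mathlib

section
/- Let w be a word of length i over an alphabet Σ, and suppose w = x^{i/d} where x is the unique aperiodic word of length d such that w is a power of x. Then the number of unordered pairs {u,v} of nonempty words with u ≠ v and uv = vu = w equals ⌊(i/d − 1)/2⌋. -/
/-- w^j : j repeated copies of the word w joined together. -/
def wpow {α : Type*} (w : List α) (j : ℕ) : List α := (List.replicate j w).flatten

/-- A nonempty word is aperiodic (primitive) if writing it as x^j with j ≥ 1 forces j = 1. -/
def Aperiodic {α : Type*} (w : List α) : Prop :=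
  w ≠ [] ∧ ∀ (x : List α) (j : ℕ), 1 ≤ j → w = wpow x j → j = 1

theorem wpow_zero {α : Type*} (x : List α) : wpow x 0 = [] := rfl

theorem wpow_succ {α : Type*} (x : List α) (j : ℕ) : wpow x (j+1) = x ++ wpow x j := by
  simp [wpow, List.replicate_succ]

theorem wpow_one {α : Type*} (x : List α) : wpow x 1 = x := by simp [wpow]

theorem wpow_add {α : Type*} (x : List α) (a b : ℕ) :
    wpow x (a + b) = wpow x a ++ wpow x b := by
  rw [wpow, wpow, wpow, List.replicate_add, List.flatten_append]

theorem length_wpow {α : Type*} (x : List α) (j : ℕ) :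
    (wpow x j).length = j * x.length := by
  simp [wpow]

/-- commuting words are powers of a common word -/
theorem comm_lists {α : Type*} : ∀ n (u v : List α), u.length + v.length ≤ n →
    u ++ v = v ++ u → ∃ z k l, u = wpow z k ∧ v = wpow z l := by
  intro n
  induction n with
  | zero =>
    intro u v hlen _
    have hu : u = [] := by
      have := List.length_eq_zero_iff.mp (by omega : u.length = 0); exact this
    have hv : v = [] := by
      have := List.length_eq_zero_iff.mp (by omega : v.length = 0); exact this
    exact ⟨[], 0, 0, by simp [hu, wpow_zero], by simp [hv, wpow_zero]⟩
  | succ n ih =>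
    intro u v hlen h
    rcases le_total u.length v.length with hle | hle
    · by_cases hu : u = []
      · exact ⟨v, 0, 1, by simp [hu, wpow_zero], by rw [wpow_one]⟩
      · have hupref : u = v.take u.length := by
          have h1 : (u ++ v).take u.length = u := List.take_left (l₁ := u) (l₂ := v)
          have h2 : (v ++ u).take u.length = v.take u.length :=
            List.take_append_of_le_length hle
          rw [h, h2] at h1; exact h1.symm
        set s := v.drop u.length with hs
        have hv : v = u ++ s := by
          conv_lhs => rw [← List.take_append_drop u.length v]
          rw [← hupref]
        have hcomm : u ++ s = s ++ u := by
          have : u ++ (u ++ s) = (u ++ s) ++ u := by rw [← hv, h]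
          simpa [List.append_assoc] using this
        have hul : 1 ≤ u.length := by
          cases u with
          | nil => exact absurd rfl hu
          | cons a t => simp
        have hlen' : u.length + s.length ≤ n := by
          have : s.length = v.length - u.length := by simp [hs]
          omega
        obtain ⟨z, k, l, hzu, hzs⟩ := ih u s hlen' hcomm
        exact ⟨z, k, k + l, hzu, by rw [hv, hzu, hzs, ← wpow_add]⟩
    · by_cases hv : v = []
      · exact ⟨u, 1, 0, by rw [wpow_one], by simp [hv, wpow_zero]⟩
      · have hupref : v = u.take v.length := by
          have h1 : (v ++ u).take v.length = v := List.take_left (l₁ := v) (l₂ := u)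
          have h2 : (u ++ v).take v.length = u.take v.length :=
            List.take_append_of_le_length hle
          rw [← h, h2] at h1; exact h1.symm
        set s := u.drop v.length with hs
        have hu : u = v ++ s := by
          conv_lhs => rw [← List.take_append_drop v.length u]
          rw [← hupref]
        have hcomm : v ++ s = s ++ v := by
          have : v ++ (v ++ s) = (v ++ s) ++ v := by rw [← hu, ← h]
          simpa [List.append_assoc] using this
        have hvl : 1 ≤ v.length := by
          cases v with
          | nil => exact absurd rfl hv
          | cons a t => simp
        have hlen' : v.length + s.length ≤ n := by
          have : s.length = u.length - v.length := by simp [hs]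
          omega
        obtain ⟨z, k, l, hzv, hzs⟩ := ih v s hlen' hcomm
        exact ⟨z, k + l, k, by rw [hu, hzv, hzs, ← wpow_add], hzv⟩

theorem comm_wpow {α : Type*} {a c : List α} (h : a ++ c = c ++ a) (j : ℕ) :
    a ++ wpow c j = wpow c j ++ a := by
  induction j with
  | zero => simp [wpow_zero]
  | succ n ih =>
    rw [wpow_succ, ← List.append_assoc, h, List.append_assoc, ih, List.append_assoc]

/-- two words commuting with a common nonempty word commute -/
theorem comm_of_comm_common {α : Type*} {a b c : List α} (hc : c ≠ [])
    (ha : a ++ c = c ++ a) (hb : b ++ c = c ++ b) : a ++ b = b ++ a := by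
  have hcl : 1 ≤ c.length := by
    cases c with
    | nil => exact absurd rfl hc
    | cons x t => simp
  set j := a.length + b.length with hj
  set p := wpow c j with hp
  have hpl : a.length + b.length ≤ p.length := by
    rw [hp, length_wpow]
    calc j = j * 1 := (mul_one j).symm
    _ ≤ j * c.length := Nat.mul_le_mul_left j hcl
  have hap : a ++ p = p ++ a := comm_wpow ha j
  have hbp : b ++ p = p ++ b := comm_wpow hb j
  have hta : p.take a.length = a := by
    have h1 : (a ++ p).take a.length = a := List.take_left (l₁ := a) (l₂ := p)
    have h2 : (p ++ a).take a.length = p.take a.length :=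
      List.take_append_of_le_length (by omega)
    rw [hap, h2] at h1
    exact h1
  have htb : p.take b.length = b := by
    have h1 : (b ++ p).take b.length = b := List.take_left (l₁ := b) (l₂ := p)
    have h2 : (p ++ b).take b.length = p.take b.length :=
      List.take_append_of_le_length (by omega)
    rw [hbp, h2] at h1
    exact h1
  have h1 : p.take (a.length + b.length) = a ++ b := by
    have h3 : (a ++ p).take (a.length + b.length) = a ++ p.take b.length :=
      List.take_length_add_append b.length
    have h4 : (p ++ a).take (a.length + b.length) = p.take (a.length + b.length) :=
      List.take_append_of_le_length (by omega)
    rw [hap, h4, htb] at h3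
    exact h3
  have h2 : p.take (b.length + a.length) = b ++ a := by
    have h3 : (b ++ p).take (b.length + a.length) = b ++ p.take a.length :=
      List.take_length_add_append a.length
    have h4 : (p ++ b).take (b.length + a.length) = p.take (b.length + a.length) :=
      List.take_append_of_le_length (by omega)
    rw [hbp, h4, hta] at h3
    exact h3
  rw [← h1, ← h2, Nat.add_comm]

/-- a word commuting with an aperiodic word is a power of it -/
theorem pow_of_comm_aperiodic {α : Type*} {u x : List α} (hxa : Aperiodic x)
    (h : u ++ x = x ++ u) : ∃ k, u = wpow x k := by
  obtain ⟨z, k, l, hu, hx⟩ := comm_lists (u.length + x.length) u x le_rfl h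
  have hl : 1 ≤ l := by
    rcases Nat.eq_zero_or_pos l with h0 | h0
    · exfalso; exact hxa.1 (by rw [hx, h0, wpow_zero])
    · exact h0
  have := hxa.2 z l hl hx
  subst this
  rw [wpow_one] at hx
  exact ⟨k, by rw [hu, hx]⟩

theorem wpow_ne_nil {α : Type*} {x : List α} (hx : x ≠ []) {k : ℕ} (hk : 1 ≤ k) :
    wpow x k ≠ [] := by
  intro h
  have := congrArg List.length h
  rw [length_wpow] at this
  simp at this
  rcases this with h1 | h1
  · omega
  · exact hx h1

/-- if w has length i and w = x^{i/d} for the (unique) aperiodic word x of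
length d of which w is a power, then the number of unordered pairs {u,v} of nonempty
words with u ≠ v and uv = vu = w equals ⌊(i/d − 1)/2⌋. -/
theorem stmt_8 {α : Type*} [DecidableEq α] (i d : ℕ) (hd : 0 < d) (hdi : d ∣ i)
    (w x : List α) (hw : w.length = i) (hx : x.length = d)
    (hxa : Aperiodic x) (hpow : w = wpow x (i / d)) :
    Set.ncard {s : Finset (List α) | ∃ u v : List α,
        u ≠ [] ∧ v ≠ [] ∧ u ≠ v ∧ u ++ v = w ∧ v ++ u = w ∧ s = {u, v}} =
      (i / d - 1) / 2 := by
  set n := i / d with hn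
  have hxnil : x ≠ [] := hxa.1
  have hi : i = n * d := by
    rw [← hw, hpow, length_wpow, hx]
  set m := (n - 1) / 2 with hm
  set f : ℕ → Finset (List α) := fun k => ({wpow x k, wpow x (n - k)} : Finset (List α))
    with hf
  -- powers of x with distinct exponents are distinct
  have hpne : ∀ k l : ℕ, k ≠ l → wpow x k ≠ wpow x l := by
    intro k l hkl he
    have := congrArg List.length he
    rw [length_wpow, length_wpow, hx] at this
    exact hkl (Nat.eq_of_mul_eq_mul_right hd this)
  have hS : {s : Finset (List α) | ∃ u v : List α,
        u ≠ [] ∧ v ≠ [] ∧ u ≠ v ∧ u ++ v = w ∧ v ++ u = w ∧ s = {u, v}} =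
      f '' ↑(Finset.Icc 1 m) := by
    ext s
    simp only [Set.mem_setOf_eq, Set.mem_image, Finset.coe_Icc, Set.mem_Icc]
    constructor
    · rintro ⟨u, v, hu, hv, huv, h1, h2, hs⟩
      -- u and v commute
      have hcomm : u ++ v = v ++ u := by rw [h1, h2]
      -- w is nonempty, so n ≥ 1
      have hwne : w ≠ [] := by
        rw [← h1]; intro h; exact hu (List.append_eq_nil_iff.mp h).1
      -- u commutes with w
      have huw : u ++ w = w ++ u := by
        conv_lhs => rw [← h2]
        conv_rhs => rw [← h1]
        rw [← List.append_assoc]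
      have hvw : v ++ w = w ++ v := by
        conv_lhs => rw [← h1]
        conv_rhs => rw [← h2]
        rw [← List.append_assoc]
      -- x commutes with w
      have hxw : x ++ w = w ++ x := by
        rw [hpow]
        exact comm_wpow rfl n
      have hux : u ++ x = x ++ u := comm_of_comm_common hwne huw hxw
      have hvx : v ++ x = x ++ v := comm_of_comm_common hwne hvw hxw
      obtain ⟨k, hk⟩ := pow_of_comm_aperiodic hxa hux
      obtain ⟨l, hl⟩ := pow_of_comm_aperiodic hxa hvx
      have hkl : k + l = n := by
        have := congrArg List.length h1
        rw [hk, hl] at this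
        rw [List.length_append, length_wpow, length_wpow, hw, hi, hx] at this
        have : (k + l) * d = n * d := by rw [Nat.add_mul]; omega
        exact Nat.eq_of_mul_eq_mul_right hd this
      have hk1 : 1 ≤ k := by
        rcases Nat.eq_zero_or_pos k with h0 | h0
        · exact absurd (by rw [hk, h0, wpow_zero]) hu
        · exact h0
      have hl1 : 1 ≤ l := by
        rcases Nat.eq_zero_or_pos l with h0 | h0
        · exact absurd (by rw [hl, h0, wpow_zero]) hv
        · exact h0
      have hkne : k ≠ l := by
        intro h; exact huv (by rw [hk, hl, h])
      refine ⟨min k l, ⟨by omega, by omega⟩, ?_⟩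
      rcases le_total k l with hkl' | hkl'
      · have h3 : min k l = k := by omega
        have h4 : n - k = l := by omega
        show ({wpow x (min k l), wpow x (n - min k l)} : Finset (List α)) = s
        rw [h3, h4, hs, hk, hl]
      · have h3 : min k l = l := by omega
        have h4 : n - l = k := by omega
        show ({wpow x (min k l), wpow x (n - min k l)} : Finset (List α)) = s
        rw [h3, h4, hs, hk, hl, Finset.pair_comm]
    · rintro ⟨k, ⟨hk1, hk2⟩, hs⟩
      have hkn : 2 * k < n := by omega
      refine ⟨wpow x k, wpow x (n - k), wpow_ne_nil hxnil hk1,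
        wpow_ne_nil hxnil (by omega), hpne k (n - k) (by omega), ?_, ?_, ?_⟩
      · rw [← wpow_add, hpow]
        congr 1; omega
      · rw [← wpow_add, hpow]
        congr 1; omega
      · exact hs.symm
  rw [hS]
  have hinj : Set.InjOn f ↑(Finset.Icc 1 m) := by
    intro k hk l hl he
    simp only [Finset.coe_Icc, Set.mem_Icc] at hk hl
    have h1 : wpow x k ∈ ({wpow x l, wpow x (n - l)} : Finset (List α)) := by
      have h0 : wpow x k ∈ ({wpow x k, wpow x (n - k)} : Finset (List α)) :=
        Finset.mem_insert_self _ _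
      have he' : ({wpow x k, wpow x (n - k)} : Finset (List α)) =
          ({wpow x l, wpow x (n - l)} : Finset (List α)) := he
      rw [he'] at h0
      exact h0
    rcases Finset.mem_insert.mp h1 with h2 | h2
    · by_contra hne
      exact hpne k l hne h2
    · rw [Finset.mem_singleton] at h2
      have := congrArg List.length h2
      rw [length_wpow, length_wpow, hx] at this
      have hkl : k = n - l := Nat.eq_of_mul_eq_mul_right hd this
      omega
  rw [Set.ncard_image_of_injOn hinj, Set.ncard_coe_finset, Nat.card_Icc]
  omega
end

section
/- Fix an integer k ≥ 2 and an alphabet Σ of k symbols. For every integer i ≥ 2, S(i) = (i−1)·k^i − Σ_{d | i, d < i} ⌊(i/d − 1)/2⌋ · Σ_{d' | d} μ(d/d')·k^{d'}, where S(i) is the number of unordered ligation reaction sets {u,v,z} with uv = z and |z| = i, and μ is the classical Möbius function. Consequently |R^SET_n| = 2·Σ_{i=2}^{n} S(i). -/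
/-- S(i): the number of unordered ligation reaction sets {u,v,z} with uv = z and |z| = i,
i.e. ordered triples (u,v,z) with uv = z, |z| = i, counted up to identifying (u,v,z)
with (v,u,z) whenever uv = vu = z (the SET convention). -/
noncomputable def S (k i : ℕ) : ℕ :=
  Set.ncard {s : Finset (List (Fin k)) | ∃ u v : List (Fin k),
    u ≠ [] ∧ v ≠ [] ∧ (u ++ v).length = i ∧ s = {u, v, u ++ v}}

/-- |R^SET_n| = 2·Σ_{i=2}^{n} S(i): the number of ligation and cleavage reactions
involving words of length at most n under the SET convention. -/
noncomputable def RSET (k n : ℕ) : ℕ := 2 * ∑ i ∈ Finset.Icc 2 n, S k i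

namespace Stmt10

variable {α : Type*}

/-- `pw t n` is the `n`-th power `t^n` of the word `t` (concatenation). -/
def pw (t : List α) : ℕ → List α
  | 0 => []
  | n + 1 => t ++ pw t n

@[simp] lemma pw_zero (t : List α) : pw t 0 = [] := rfl

lemma pw_succ (t : List α) (n : ℕ) : pw t (n + 1) = t ++ pw t n := rfl

@[simp] lemma pw_one (t : List α) : pw t 1 = t := by simp [pw]

lemma pw_add (t : List α) (m n : ℕ) : pw t (m + n) = pw t m ++ pw t n := by
  induction m with
  | zero => simp
  | succ m ih => rw [Nat.succ_add, pw_succ, pw_succ, ih, List.append_assoc]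

lemma pw_succ' (t : List α) (n : ℕ) : pw t (n + 1) = pw t n ++ t := by
  rw [pw_add, pw_one]

@[simp] lemma length_pw (t : List α) (n : ℕ) : (pw t n).length = n * t.length := by
  induction n with
  | zero => simp
  | succ n ih => rw [pw_succ, List.length_append, ih]; ring

lemma pw_pw (t : List α) (m n : ℕ) : pw (pw t m) n = pw t (n * m) := by
  induction n with
  | zero => simp
  | succ n ih => rw [pw_succ, ih, Nat.succ_mul, Nat.add_comm, pw_add]

lemma pw_comm (t : List α) (m n : ℕ) : pw t m ++ pw t n = pw t n ++ pw t m := by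
  rw [← pw_add, ← pw_add, Nat.add_comm]

lemma pw_ne_nil {t : List α} (ht : t ≠ []) {n : ℕ} (hn : 1 ≤ n) : pw t n ≠ [] := by
  intro h
  have := congrArg List.length h
  simp only [length_pw, List.length_nil] at this
  rcases Nat.mul_eq_zero.mp this with h1 | h2
  · omega
  · exact ht (List.length_eq_zero_iff.mp h2)

lemma pw_nil (n : ℕ) : pw ([] : List α) n = [] := by
  induction n with
  | zero => rfl
  | succ n ih => rw [pw_succ, ih]; rfl

/-- Commuting words have a common root. -/
lemma comm_exists_aux : ∀ N : ℕ, ∀ u v : List α, u.length + v.length ≤ N →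
    u ++ v = v ++ u → ∃ t m n, u = pw t m ∧ v = pw t n := by
  intro N
  induction N with
  | zero =>
    intro u v hl _
    have hu : u = [] := List.length_eq_zero_iff.mp (by omega)
    have hv : v = [] := List.length_eq_zero_iff.mp (by omega)
    exact ⟨[], 0, 0, by simp [hu], by simp [hv]⟩
  | succ N ih =>
    intro u v hl h
    rcases eq_or_ne u [] with rfl | hu
    · exact ⟨v, 0, 1, by simp, by simp⟩
    rcases eq_or_ne v [] with rfl | hv
    · exact ⟨u, 1, 0, by simp, by simp⟩
    rcases le_total u.length v.length with hle | hle
    · have h1 : u <+: v ++ u := h ▸ u.prefix_append v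
      have h2 : v <+: v ++ u := v.prefix_append u
      have hpre : u <+: v := List.prefix_of_prefix_length_le h1 h2 hle
      obtain ⟨w, rfl⟩ := hpre
      have h' : u ++ w = w ++ u := by
        apply List.append_cancel_left (as := u)
        simpa [List.append_assoc] using h
      have hlen : u.length + w.length ≤ N := by
        have : 1 ≤ u.length := by
          cases u with
          | nil => exact absurd rfl hu
          | cons a l => simp
        simp only [List.length_append] at hl
        omega
      obtain ⟨t, m, n, hu', hw'⟩ := ih u w hlen h'
      exact ⟨t, m, m + n, hu', by rw [pw_add, ← hu', ← hw']⟩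
    · have h1 : v <+: u ++ v := h ▸ v.prefix_append u
      have h2 : u <+: u ++ v := u.prefix_append v
      have hpre : v <+: u := List.prefix_of_prefix_length_le h1 h2 hle
      obtain ⟨w, rfl⟩ := hpre
      have h' : v ++ w = w ++ v := by
        apply List.append_cancel_left (as := v)
        simpa [List.append_assoc] using h.symm
      have hlen : v.length + w.length ≤ N := by
        have : 1 ≤ v.length := by
          cases v with
          | nil => exact absurd rfl hv
          | cons a l => simp
        simp only [List.length_append] at hl
        omega
      obtain ⟨t, m, n, hv', hw'⟩ := ih v w hlen h'
      exact ⟨t, m + n, m, by rw [pw_add, ← hv', ← hw'], hv'⟩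

lemma comm_exists {u v : List α} (h : u ++ v = v ++ u) :
    ∃ t m n, u = pw t m ∧ v = pw t n :=
  comm_exists_aux (u.length + v.length) u v le_rfl h

/-- A word is primitive if it is nonempty and not a proper power. -/
def Primitive (w : List α) : Prop := w ≠ [] ∧ ∀ t n, w = pw t n → t = w

lemma Primitive.ne_nil {w : List α} (h : Primitive w) : w ≠ [] := h.1

lemma Primitive.length_pos {w : List α} (h : Primitive w) : 0 < w.length :=
  List.length_pos_iff.mpr h.1

/-- Existence of the primitive root. -/
lemma exists_prim_aux : ∀ N : ℕ, ∀ w : List α, w.length ≤ N → w ≠ [] →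
    ∃ t m, Primitive t ∧ 1 ≤ m ∧ w = pw t m := by
  intro N
  induction N with
  | zero =>
    intro w hl hw
    exact absurd (List.length_eq_zero_iff.mp (by omega)) hw
  | succ N ih =>
    intro w hl hw
    by_cases hp : Primitive w
    · exact ⟨w, 1, hp, le_rfl, by simp⟩
    · have : ∃ t n, w = pw t n ∧ t ≠ w := by
        by_contra hc
        push_neg at hc
        exact hp ⟨hw, fun t n h => hc t n h⟩
      obtain ⟨t, n, hwtn, htw⟩ := this
      have ht : t ≠ [] := by
        rintro rfl
        exact hw (by rw [hwtn, pw_nil])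
      have hn2 : 2 ≤ n := by
        rcases n with _ | _ | n
        · exact absurd (by rw [hwtn]; rfl) hw
        · exact absurd (by rw [hwtn, pw_one]) htw.symm
        · omega
      have htlen : t.length ≤ N := by
        have h1 : 1 ≤ t.length := List.length_pos_iff.mpr ht
        have h2 : w.length = n * t.length := by rw [hwtn, length_pw]
        nlinarith
      obtain ⟨s, m, hs, hm, hts⟩ := ih t htlen ht
      exact ⟨s, n * m, hs, Nat.one_le_iff_ne_zero.mpr (Nat.mul_ne_zero (by omega) (by omega)), by rw [hwtn, hts, pw_pw]⟩

lemma exists_prim (w : List α) (hw : w ≠ []) :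
    ∃ t m, Primitive t ∧ 1 ≤ m ∧ w = pw t m :=
  exists_prim_aux w.length w le_rfl hw

/-- Uniqueness of the primitive root: auxiliary version with a length hypothesis. -/
lemma prim_unique_aux {s t : List α} (hs : Primitive s) (ht : Primitive t) {a b : ℕ}
    (ha : 1 ≤ a) (hb : 1 ≤ b) (h : pw s a = pw t b) (hle : s.length ≤ t.length) : s = t := by
  rcases eq_or_lt_of_le hb with hb1 | hb2
  · -- b = 1 : t = pw s a, so s = t by primitivity of t
    have : t = pw s a := by rw [h, ← hb1, pw_one]
    exact ht.2 s a this
  · -- b ≥ 2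
    obtain ⟨c, rfl⟩ : ∃ c, a = c + 1 := ⟨a - 1, by omega⟩
    obtain ⟨d, rfl⟩ : ∃ d, b = d + 2 := ⟨b - 2, by omega⟩
    have hsnil := hs.ne_nil
    have htnil := ht.ne_nil
    have hsl := hs.length_pos
    have htl := ht.length_pos
    have hwdecomp : pw s (c + 1) = s ++ pw s c := pw_succ s c
    have hspre : s <+: pw s (c + 1) := by rw [hwdecomp]; exact s.prefix_append _
    have htpre : t <+: pw s (c + 1) := by
      rw [h, pw_succ]
      exact t.prefix_append _
    have hst : s <+: t := List.prefix_of_prefix_length_le hspre htpre hle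
    obtain ⟨r, hr⟩ := hst
    rcases eq_or_ne r [] with rfl | hrne
    · rw [← hr]; simp
    -- main case : r ≠ []
    have hlen : (c + 1) * s.length = (d + 2) * t.length := by
      have := congrArg List.length h
      simpa using this
    have hta : t.length ≤ (pw s c).length := by
      rw [length_pw]
      nlinarith
    have hmid : pw s c <+: pw s (c + 1) := by
      rw [pw_succ']
      exact List.prefix_append _ _
    have hpre1 : s ++ r <+: pw s c := by
      rw [hr]
      exact List.prefix_of_prefix_length_le htpre hmid hta
    have hpre2 : r ++ s <+: pw s c := by
      refine ⟨r ++ pw t d, ?_⟩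
      have hw2 : s ++ pw s c = s ++ (r ++ s ++ (r ++ pw t d)) := by
        calc s ++ pw s c = pw s (c + 1) := (pw_succ s c).symm
          _ = pw t (d + 2) := h
          _ = t ++ (t ++ pw t d) := by rw [pw_succ, pw_succ]
          _ = s ++ (r ++ s ++ (r ++ pw t d)) := by rw [← hr]; simp [List.append_assoc]
      exact (List.append_cancel_left hw2).symm
    have hcomm : s ++ r = r ++ s := by
      have h1 : s ++ r <+: r ++ s :=
        List.prefix_of_prefix_length_le hpre1 hpre2 (by simp [Nat.add_comm])
      exact h1.eq_of_length (by simp [Nat.add_comm])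
    obtain ⟨g, m, n, hsg, hrg⟩ := comm_exists hcomm
    have hgs : g = s := hs.2 g m hsg
    subst hgs
    have hn1 : 1 ≤ n := by
      rcases Nat.eq_zero_or_pos n with rfl | h'
      · exact absurd hrg.symm (by simpa using hrne)
      · exact h'
    have htpow : t = pw g (n + 1) := by
      rw [← hr, pw_succ, ← hrg]
    exact ht.2 g (n + 1) htpow


/-- Uniqueness of the primitive root. -/
lemma prim_unique {s t : List α} (hs : Primitive s) (ht : Primitive t) {a b : ℕ}
    (ha : 1 ≤ a) (hb : 1 ≤ b) (h : pw s a = pw t b) : s = t := by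
  rcases le_total s.length t.length with hle | hle
  · exact prim_unique_aux hs ht ha hb h hle
  · exact (prim_unique_aux ht hs hb ha h.symm hle).symm

open Classical in
/-- The primitive root of a word. -/
noncomputable def proot (w : List α) : List α :=
  if h : w = [] then [] else (exists_prim w h).choose

open Classical in
/-- The exponent of a word over its primitive root. -/
noncomputable def pexp (w : List α) : ℕ :=
  if h : w = [] then 0 else (exists_prim w h).choose_spec.choose

lemma proot_spec {w : List α} (hw : w ≠ []) :
    Primitive (proot w) ∧ 1 ≤ pexp w ∧ w = pw (proot w) (pexp w) := by
  rw [proot, pexp, dif_neg hw, dif_neg hw]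
  obtain ⟨h1, h2, h3⟩ := (exists_prim w hw).choose_spec.choose_spec
  exact ⟨h1, h2, h3⟩

lemma proot_eq {t : List α} (ht : Primitive t) {m : ℕ} (hm : 1 ≤ m) :
    proot (pw t m) = t ∧ pexp (pw t m) = m := by
  have hw : pw t m ≠ [] := pw_ne_nil ht.ne_nil hm
  obtain ⟨h1, h2, h3⟩ := proot_spec hw
  have heq : proot (pw t m) = t := prim_unique h1 ht h2 hm h3.symm
  refine ⟨heq, ?_⟩
  have := congrArg List.length h3
  rw [length_pw, heq, length_pw] at this
  exact Nat.eq_of_mul_eq_mul_right ht.length_pos this.symm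

lemma length_proot_dvd {w : List α} (hw : w ≠ []) : (proot w).length ∣ w.length := by
  obtain ⟨_, _, h3⟩ := proot_spec hw
  exact ⟨pexp w, by nth_rewrite 1 [h3]; rw [length_pw, Nat.mul_comm]⟩

lemma pexp_eq_div {w : List α} (hw : w ≠ []) : pexp w = w.length / (proot w).length := by
  obtain ⟨h1, _, h3⟩ := proot_spec hw
  have h4 : w.length = pexp w * (proot w).length := by
    nth_rewrite 1 [h3]; rw [length_pw]
  rw [h4, Nat.mul_div_cancel _ h1.length_pos]

/-! ### Counting over the alphabet `Fin k` -/

open Finset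

variable (k : ℕ)

/-- The finset of all words of length `m` over `Fin k`. -/
noncomputable def W (m : ℕ) : Finset (List (Fin k)) :=
  (Finset.univ : Finset (Fin m → Fin k)).image List.ofFn

lemma mem_W {m : ℕ} {l : List (Fin k)} : l ∈ W k m ↔ l.length = m := by
  constructor
  · rintro hl
    obtain ⟨f, _, rfl⟩ := Finset.mem_image.mp hl
    simp
  · rintro rfl
    exact Finset.mem_image.mpr ⟨l.get, Finset.mem_univ _, List.ofFn_get l⟩

lemma card_W (m : ℕ) : (W k m).card = k ^ m := by
  rw [W, Finset.card_image_of_injective _ List.ofFn_injective, Finset.card_univ]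
  simp

open Classical in
/-- The finset of primitive words of length `d` over `Fin k`. -/
noncomputable def PF (d : ℕ) : Finset (List (Fin k)) :=
  (W k d).filter (fun w => Primitive w)

open Classical in
lemma mem_PF {d : ℕ} {t : List (Fin k)} : t ∈ PF k d ↔ t.length = d ∧ Primitive t := by
  rw [PF, Finset.mem_filter, mem_W]

/-- `∑_{d ∣ n} P(d) = k^n`. -/
lemma sum_PF_card {n : ℕ} (hn : 1 ≤ n) :
    ∑ d ∈ n.divisors, (PF k d).card = k ^ n := by
  classical
  rw [← card_W k n, ← Finset.card_sigma]
  refine Finset.card_bij' (fun x _ => pw x.2 (n / x.1))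
    (fun w _ => ⟨(proot w).length, proot w⟩) ?_ ?_ ?_ ?_
  · rintro ⟨d, t⟩ hx
    rw [Finset.mem_sigma] at hx
    obtain ⟨hd, ht⟩ := hx
    rw [Nat.mem_divisors] at hd
    rw [mem_PF] at ht
    rw [mem_W, length_pw, ht.1, Nat.div_mul_cancel hd.1]
  · rintro w hw
    rw [mem_W] at hw
    have hwne : w ≠ [] := by
      intro h; rw [h] at hw; simp at hw; omega
    obtain ⟨h1, h2, h3⟩ := proot_spec hwne
    rw [Finset.mem_sigma, Nat.mem_divisors, mem_PF]
    refine ⟨⟨?_, by omega⟩, rfl, h1⟩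
    rw [← hw]
    exact length_proot_dvd hwne
  · rintro ⟨d, t⟩ hx
    rw [Finset.mem_sigma] at hx
    obtain ⟨hd, ht⟩ := hx
    rw [Nat.mem_divisors] at hd
    rw [mem_PF] at ht
    have hq : 1 ≤ n / d := by
      have := Nat.div_mul_cancel hd.1
      have hd0 : 0 < d := by
        rcases Nat.eq_zero_or_pos d with rfl | h
        · simp at this; omega
        · exact h
      exact Nat.one_le_div_iff hd0 |>.mpr (Nat.le_of_dvd (by omega) hd.1)
    obtain ⟨hp, he⟩ := proot_eq ht.2 hq
    dsimp only at hp he ht hd ⊢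
    have hdt : t.length = d := ht.1
    subst hdt
    rw [hp]
  · rintro w hw
    rw [mem_W] at hw
    have hwne : w ≠ [] := by
      intro h; rw [h] at hw; simp at hw; omega
    obtain ⟨h1, h2, h3⟩ := proot_spec hwne
    dsimp only
    rw [← hw, ← pexp_eq_div hwne]
    exact h3.symm

/-- The finset of pairs of nonempty words with total length `i`. -/
noncomputable def PairsF (i : ℕ) : Finset (List (Fin k) × List (Fin k)) :=
  (Finset.Icc 1 (i - 1) ×ˢ W k i).image (fun jw => (jw.2.take jw.1, jw.2.drop jw.1))

lemma mem_PairsF {i : ℕ} {p : List (Fin k) × List (Fin k)} :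
    p ∈ PairsF k i ↔ p.1 ≠ [] ∧ p.2 ≠ [] ∧ p.1.length + p.2.length = i := by
  constructor
  · rintro hp
    obtain ⟨⟨j, w⟩, hm, rfl⟩ := Finset.mem_image.mp hp
    rw [Finset.mem_product, Finset.mem_Icc, mem_W] at hm
    obtain ⟨⟨hj1, hj2⟩, hwl⟩ := hm
    dsimp only at *
    have h1 : (w.take j).length = j := by
      rw [List.length_take]; omega
    have h2 : (w.drop j).length = i - j := by
      rw [List.length_drop]; omega
    refine ⟨?_, ?_, by simp only [h1, h2]; omega⟩
    · intro h; rw [h] at h1; simp at h1; omega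
    · intro h; rw [h] at h2; simp at h2; omega
  · rintro ⟨h1, h2, h3⟩
    refine Finset.mem_image.mpr ⟨(p.1.length, p.1 ++ p.2), ?_, ?_⟩
    · rw [Finset.mem_product, Finset.mem_Icc, mem_W]
      have := List.length_pos_iff.mpr h1
      have := List.length_pos_iff.mpr h2
      simp only [List.length_append]
      omega
    · simp

lemma card_PairsF {i : ℕ} (hi : 1 ≤ i) : (PairsF k i).card = (i - 1) * k ^ i := by
  rw [PairsF, Finset.card_image_of_injOn, Finset.card_product, Nat.card_Icc, card_W]
  · simp
  · rintro ⟨j, w⟩ hm ⟨j', w'⟩ hm' heq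
    rw [Finset.mem_coe, Finset.mem_product, Finset.mem_Icc, mem_W] at hm hm'
    dsimp only at *
    simp only [Prod.mk.injEq] at heq
    obtain ⟨ht, hd⟩ := heq
    have hj : j = j' := by
      have h1 := congrArg List.length ht
      rw [List.length_take, List.length_take] at h1
      omega
    subst hj
    have hw : w = w' := by
      rw [← List.take_append_drop j w, ht, hd, List.take_append_drop]
    subst hw
    rfl

open Classical in
/-- Commuting pairs. -/
noncomputable def CF (i : ℕ) : Finset (List (Fin k) × List (Fin k)) :=
  (PairsF k i).filter (fun p => p.1 ++ p.2 = p.2 ++ p.1)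

/-- The structure of a commuting pair of nonempty words. -/
lemma comm_struct {u v : List (Fin k)} (hu : u ≠ []) (hv : v ≠ []) (h : u ++ v = v ++ u) :
    ∃ (s : List (Fin k)) (a b : ℕ), Primitive s ∧ 1 ≤ a ∧ 1 ≤ b ∧ u = pw s a ∧ v = pw s b := by
  obtain ⟨g, m, n, hum, hvn⟩ := comm_exists h
  have hg : g ≠ [] := by rintro rfl; exact hu (by rw [hum, pw_nil])
  have hm : 1 ≤ m := by
    rcases Nat.eq_zero_or_pos m with rfl | h
    · rw [pw_zero] at hum; exact absurd hum hu
    · exact h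
  have hn : 1 ≤ n := by
    rcases Nat.eq_zero_or_pos n with rfl | h
    · rw [pw_zero] at hvn; exact absurd hvn hv
    · exact h
  obtain ⟨s, e, hs, he, hg⟩ := exists_prim g hg
  exact ⟨s, m * e, n * e, hs, Nat.one_le_iff_ne_zero.mpr (by positivity),
    Nat.one_le_iff_ne_zero.mpr (by positivity),
    by rw [hum, hg, pw_pw], by rw [hvn, hg, pw_pw]⟩

/-- Structure of a member of `CF` in terms of `proot` and `pexp`. -/
lemma CF_struct {i : ℕ} {p : List (Fin k) × List (Fin k)} (hp : p ∈ CF k i) :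
    Primitive (proot p.1) ∧ p.1 = pw (proot p.1) (pexp p.1) ∧
    p.2 = pw (proot p.1) (i / (proot p.1).length - pexp p.1) ∧
    (proot p.1).length ∈ i.properDivisors ∧
    pexp p.1 ∈ Finset.Icc 1 (i / (proot p.1).length - 1) := by
  classical
  obtain ⟨hmem, hcomm⟩ := Finset.mem_filter.mp hp
  obtain ⟨hu, hv, hlen⟩ := (mem_PairsF k).mp hmem
  obtain ⟨s, a, b, hs, ha, hb, hua, hvb⟩ := comm_struct k hu hv hcomm
  obtain ⟨hp1, hp2⟩ := proot_eq hs ha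
  have hsl := hs.length_pos
  have hil : i = (a + b) * s.length := by
    rw [← hlen, hua, hvb, length_pw, length_pw]; ring
  have hid : i / s.length = a + b := by
    rw [hil, Nat.mul_div_cancel _ hsl]
  have hroot : proot p.1 = s := by rw [hua]; exact hp1
  have hexp : pexp p.1 = a := by rw [hua]; exact hp2
  rw [hroot, hexp]
  refine ⟨hs, hua, ?_, ?_, ?_⟩
  · rw [hid, Nat.add_sub_cancel_left]
    exact hvb
  · rw [Nat.mem_properDivisors]
    refine ⟨⟨a + b, by rw [hil, Nat.mul_comm]⟩, ?_⟩
    have h2 : 2 ≤ a + b := by omega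
    nlinarith
  · rw [Finset.mem_Icc, hid]
    omega

lemma card_CF {i : ℕ} : (CF k i).card =
    ∑ d ∈ i.properDivisors, (PF k d).card * (i / d - 1) := by
  classical
  have : ∀ d ∈ i.properDivisors, (PF k d).card * (i / d - 1) =
      ((PF k d) ×ˢ Finset.Icc 1 (i / d - 1)).card := by
    intro d _
    rw [Finset.card_product, Nat.card_Icc]
    simp
  rw [Finset.sum_congr rfl this, ← Finset.card_sigma]
  symm
  refine Finset.card_bij' (fun x _ => (pw x.2.1 x.2.2, pw x.2.1 (i / x.1 - x.2.2)))
    (fun p _ => ⟨(proot p.1).length, (proot p.1, pexp p.1)⟩) ?_ ?_ ?_ ?_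
  · rintro ⟨d, t, a⟩ hx
    rw [Finset.mem_sigma, Finset.mem_product, Finset.mem_Icc] at hx
    obtain ⟨hd, ht, ha1, ha2⟩ := hx
    rw [Nat.mem_properDivisors] at hd
    rw [mem_PF] at ht
    dsimp only at *
    have hd0 : 0 < d := by
      rcases Nat.eq_zero_or_pos d with rfl | h
      · obtain ⟨c, hc⟩ := hd.1; omega
      · exact h
    have hq : i / d * d = i := Nat.div_mul_cancel hd.1
    have hq2 : 2 ≤ i / d := by
      by_contra hcon
      interval_cases h : i / d <;> omega
    have htne := ht.2.ne_nil
    rw [CF, Finset.mem_filter, mem_PairsF]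
    refine ⟨⟨pw_ne_nil htne ha1, pw_ne_nil htne (by omega), ?_⟩, ?_⟩
    · rw [length_pw, length_pw, ht.1, ← Nat.add_mul]
      rw [show a + (i / d - a) = i / d by omega]
      exact hq
    · exact pw_comm _ _ _
  · rintro p hp
    obtain ⟨hs, hu, hv, hd, ha⟩ := CF_struct k hp
    rw [Finset.mem_sigma, Finset.mem_product]
    refine ⟨hd, ⟨?_, ha⟩⟩
    rw [mem_PF]
    exact ⟨rfl, hs⟩
  · rintro ⟨d, t, a⟩ hx
    rw [Finset.mem_sigma, Finset.mem_product, Finset.mem_Icc] at hx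
    obtain ⟨hd, ht, ha1, ha2⟩ := hx
    rw [Nat.mem_properDivisors] at hd
    rw [mem_PF] at ht
    dsimp only at *
    obtain ⟨hp1, hp2⟩ := proot_eq ht.2 ha1
    rw [hp1, hp2]
    have hdt : t.length = d := ht.1
    subst hdt
    rfl
  · rintro p hp
    obtain ⟨hs, hu, hv, hd, ha⟩ := CF_struct k hp
    dsimp only
    rw [← hu, ← hv]

/-- The reaction-set map. -/
def Ff (p : List (Fin k) × List (Fin k)) : Finset (List (Fin k)) :=
  {p.1, p.2, p.1 ++ p.2}

/-- Fibers of `Ff` on `PairsF`. -/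
lemma Ff_fiber {i : ℕ} {p q : List (Fin k) × List (Fin k)}
    (hp : p ∈ PairsF k i) (hq : q ∈ PairsF k i) (h : Ff k p = Ff k q) :
    q = p ∨ (q = p.swap ∧ p.1 ++ p.2 = p.2 ++ p.1) := by
  obtain ⟨u, v⟩ := p
  obtain ⟨u', v'⟩ := q
  rw [mem_PairsF] at hp hq
  obtain ⟨hu, hv, hlen⟩ := hp
  obtain ⟨hu', hv', hlen'⟩ := hq
  dsimp only at *
  have hul := List.length_pos_iff.mpr hu
  have hvl := List.length_pos_iff.mpr hv
  have hul' := List.length_pos_iff.mpr hu'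
  have hvl' := List.length_pos_iff.mpr hv'
  have hext := Finset.ext_iff.mp h
  simp only [Ff, Finset.mem_insert, Finset.mem_singleton] at hext
  -- the long word is determined
  have hz : u' ++ v' = u ++ v := by
    rcases (hext (u' ++ v')).mpr (Or.inr (Or.inr rfl)) with h1 | h1 | h1
    · have := congrArg List.length h1; simp at this; omega
    · have := congrArg List.length h1; simp at this; omega
    · exact h1
  have hu'm : u' = u ∨ u' = v := by
    rcases (hext u').mpr (Or.inl rfl) with h1 | h1 | h1
    · exact Or.inl h1
    · exact Or.inr h1
    · have := congrArg List.length h1; simp at this; omega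
  have hv'm : v' = u ∨ v' = v := by
    rcases (hext v').mpr (Or.inr (Or.inl rfl)) with h1 | h1 | h1
    · exact Or.inl h1
    · exact Or.inr h1
    · have := congrArg List.length h1; simp at this; omega
  have hum : u = u' ∨ u = v' := by
    rcases (hext u).mp (Or.inl rfl) with h1 | h1 | h1
    · exact Or.inl h1
    · exact Or.inr h1
    · have := congrArg List.length h1; simp at this; omega
  have hvm : v = u' ∨ v = v' := by
    rcases (hext v).mp (Or.inr (Or.inl rfl)) with h1 | h1 | h1
    · exact Or.inl h1
    · exact Or.inr h1
    · have := congrArg List.length h1; simp at this; omega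
  rcases hu'm with h1 | h1
  · rcases hv'm with h2 | h2
    · -- u' = u, v' = u : then v = u
      have hvu : v = u := by
        rcases hvm with h3 | h3
        · rw [h3, h1]
        · rw [h3, h2]
      exact Or.inl (by rw [h1, h2, hvu])
    · exact Or.inl (by rw [h1, h2])
  · rcases hv'm with h2 | h2
    · -- u' = v, v' = u : swap case
      refine Or.inr ⟨by rw [h1, h2]; rfl, ?_⟩
      rw [h1, h2] at hz
      exact hz.symm
    · -- u' = v, v' = v : then u = v
      have huv : u = v := by
        rcases hum with h3 | h3
        · rw [h3, h1]
        · rw [h3, h2]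
      exact Or.inl (by rw [h1, h2, huv])

open Classical in
/-- Commuting pairs with distinct components. -/
noncomputable def QF (i : ℕ) : Finset (List (Fin k) × List (Fin k)) :=
  (PairsF k i).filter (fun p => p.1 ++ p.2 = p.2 ++ p.1 ∧ p.1 ≠ p.2)

open Classical in
lemma swap_mem_QF {i : ℕ} {p : List (Fin k) × List (Fin k)} (hp : p ∈ QF k i) :
    p.swap ∈ QF k i := by
  rw [QF, Finset.mem_filter, mem_PairsF] at hp ⊢
  simp only [Prod.fst_swap, Prod.snd_swap]
  obtain ⟨⟨h1, h2, h3⟩, h4, h5⟩ := hp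
  exact ⟨⟨h2, h1, by omega⟩, h4.symm, fun hh => h5 hh.symm⟩

open Classical in
lemma Ff_swap {p : List (Fin k) × List (Fin k)} (hc : p.1 ++ p.2 = p.2 ++ p.1) :
    Ff k p.swap = Ff k p := by
  rw [Ff, Ff]
  dsimp only [Prod.fst_swap, Prod.snd_swap]
  rw [hc, Finset.insert_comm]

open Classical in
/-- The main double-counting identity. -/
lemma two_mul_card_image {i : ℕ} :
    2 * ((PairsF k i).image (Ff k)).card + (QF k i).card = 2 * (PairsF k i).card := by
  classical
  set NQ := (PairsF k i).filter (fun p => ¬(p.1 ++ p.2 = p.2 ++ p.1 ∧ p.1 ≠ p.2)) with hNQ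
  have hsplit : (QF k i) ∪ NQ = PairsF k i := Finset.filter_union_filter_not_eq _ _
  have hcards : (QF k i).card + NQ.card = (PairsF k i).card :=
    Finset.card_filter_add_card_filter_not _
  have himg : (PairsF k i).image (Ff k) = (QF k i).image (Ff k) ∪ NQ.image (Ff k) := by
    rw [← hsplit, Finset.image_union]
  have hQsub : QF k i ⊆ PairsF k i := Finset.filter_subset _ _
  have hNsub : NQ ⊆ PairsF k i := Finset.filter_subset _ _
  -- disjointness of the two images
  have hdisj : Disjoint ((QF k i).image (Ff k)) (NQ.image (Ff k)) := by
    rw [Finset.disjoint_left]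
    rintro s hs1 hs2
    obtain ⟨p, hpQ, hps⟩ := Finset.mem_image.mp hs1
    obtain ⟨q, hqN, hqs⟩ := Finset.mem_image.mp hs2
    have hfib := Ff_fiber k (hQsub hpQ) (hNsub hqN) (by rw [hps, hqs])
    rw [QF, Finset.mem_filter] at hpQ
    rw [hNQ, Finset.mem_filter] at hqN
    rcases hfib with rfl | ⟨rfl, hcomm⟩
    · exact hqN.2 hpQ.2
    · refine hqN.2 ⟨?_, ?_⟩
      · dsimp only [Prod.fst_swap, Prod.snd_swap]
        exact hcomm.symm
      · dsimp only [Prod.fst_swap, Prod.snd_swap]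
        exact fun hh => hpQ.2.2 hh.symm
  -- injectivity on NQ
  have hNQcard : (NQ.image (Ff k)).card = NQ.card := by
    apply Finset.card_image_of_injOn
    rintro p hpN q hqN heq
    have hfib := Ff_fiber k (hNsub hpN) (hNsub hqN) heq
    rcases hfib with rfl | ⟨rfl, hcomm⟩
    · rfl
    · rw [hNQ, Finset.mem_coe, Finset.mem_filter] at hpN
      push_neg at hpN
      have hpp : p.1 = p.2 := hpN.2 hcomm
      rw [Prod.ext_iff, Prod.fst_swap, Prod.snd_swap]
      exact ⟨hpp, hpp.symm⟩
  -- `Ff` is two-to-one on QF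
  have hfibcard : ∀ s ∈ (QF k i).image (Ff k),
      ((QF k i).filter (fun q => Ff k q = s)).card = 2 := by
    intro s hs
    obtain ⟨p, hpQ, hps⟩ := Finset.mem_image.mp hs
    have hfiber : (QF k i).filter (fun q => Ff k q = s) = {p, p.swap} := by
      apply Finset.ext
      intro q
      rw [Finset.mem_filter, Finset.mem_insert, Finset.mem_singleton]
      constructor
      · rintro ⟨hqQ, hqs⟩
        have hfib := Ff_fiber k (hQsub hpQ) (hQsub hqQ) (by rw [hps, hqs])
        rcases hfib with rfl | ⟨rfl, _⟩
        · exact Or.inl rfl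
        · exact Or.inr rfl
      · rintro (rfl | rfl)
        · exact ⟨hpQ, hps⟩
        · refine ⟨swap_mem_QF k hpQ, ?_⟩
          rw [← hps]
          rw [QF, Finset.mem_filter] at hpQ
          exact Ff_swap k hpQ.2.1
    have hpne : p ≠ p.swap := by
      rw [QF, Finset.mem_filter] at hpQ
      intro hh
      rw [Prod.ext_iff] at hh
      exact hpQ.2.2 hh.1
    rw [hfiber, Finset.card_pair hpne]
  have hQcard : (QF k i).card = 2 * ((QF k i).image (Ff k)).card := by
    rw [Finset.card_eq_sum_card_fiberwise (f := Ff k) (t := (QF k i).image (Ff k))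
      (fun p hp => Finset.mem_image_of_mem _ hp),
      Finset.sum_congr rfl hfibcard, Finset.sum_const, smul_eq_mul, Nat.mul_comm]
  rw [himg, Finset.card_union_of_disjoint hdisj, hNQcard]
  omega

open Classical in
/-- `S` counts the image of `Ff` on `PairsF`. -/
lemma S_eq_card_image (i : ℕ) :
    Set.ncard {s : Finset (List (Fin k)) | ∃ u v : List (Fin k),
      u ≠ [] ∧ v ≠ [] ∧ (u ++ v).length = i ∧ s = {u, v, u ++ v}} =
    ((PairsF k i).image (Ff k)).card := by
  rw [← Set.ncard_coe_finset]
  congr 1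
  ext s
  simp only [Set.mem_setOf_eq, Finset.coe_image, Set.mem_image, Finset.mem_coe]
  constructor
  · rintro ⟨u, v, hu, hv, hlen, rfl⟩
    refine ⟨(u, v), ?_, rfl⟩
    rw [mem_PairsF]
    rw [List.length_append] at hlen
    exact ⟨hu, hv, hlen⟩
  · rintro ⟨⟨u, v⟩, hp, rfl⟩
    rw [mem_PairsF] at hp
    exact ⟨u, v, hp.1, hp.2.1, by rw [List.length_append]; exact hp.2.2, rfl⟩

open Classical in
/-- Diagonal commuting pairs. -/
noncomputable def EF (i : ℕ) : Finset (List (Fin k) × List (Fin k)) :=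
  (CF k i).filter (fun p => p.1 = p.2)

open Classical in
lemma card_EF {i : ℕ} (hi : 1 ≤ i) :
    (EF k i).card = if 2 ∣ i then k ^ (i / 2) else 0 := by
  classical
  by_cases h2 : 2 ∣ i
  · rw [if_pos h2]
    have : EF k i = (W k (i / 2)).image (fun u => (u, u)) := by
      apply Finset.ext
      intro p
      rw [EF, CF, Finset.mem_filter, Finset.mem_filter, mem_PairsF, Finset.mem_image]
      constructor
      · rintro ⟨⟨⟨hu, hv, hlen⟩, _⟩, heq⟩
        have hll : p.1.length = p.2.length := by rw [heq]
        refine ⟨p.1, ?_, Prod.ext rfl heq⟩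
        rw [mem_W]
        omega
      · rintro ⟨u, hu, rfl⟩
        rw [mem_W] at hu
        have hune : u ≠ [] := by
          intro h; rw [h] at hu; simp at hu; omega
        refine ⟨⟨⟨hune, hune, ?_⟩, rfl⟩, rfl⟩
        dsimp only
        omega
    rw [this, Finset.card_image_of_injective _ (fun a b hab => congrArg Prod.fst hab), card_W]
  · rw [if_neg h2]
    rw [Finset.card_eq_zero]
    apply Finset.eq_empty_of_forall_notMem
    intro p hp
    rw [EF, CF, Finset.mem_filter, Finset.mem_filter, mem_PairsF] at hp
    obtain ⟨⟨⟨hu, hv, hlen⟩, _⟩, heq⟩ := hp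
    rw [heq] at hlen
    exact h2 ⟨p.2.length, by omega⟩

lemma floor_helper (P q : ℕ) (hq : 2 ≤ q) :
    P * (q - 1) = 2 * ((q - 1) / 2 * P) + (if 2 ∣ q then P else 0) := by
  by_cases h : 2 ∣ q
  · rw [if_pos h]
    obtain ⟨m, rfl⟩ := h
    obtain ⟨m', rfl⟩ : ∃ m', m = m' + 1 := ⟨m - 1, by omega⟩
    rw [show 2 * (m' + 1) - 1 = 2 * m' + 1 by omega, show (2 * m' + 1) / 2 = m' by omega]
    ring
  · rw [if_neg h]
    obtain ⟨m, hm⟩ : ∃ m, q = 2 * m + 1 := ⟨q / 2, by omega⟩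
    rw [hm, show 2 * m + 1 - 1 = 2 * m by omega, show 2 * m / 2 = m by omega]
    ring

lemma quot_ge_two {i d : ℕ} (hi : 2 ≤ i) (hd : d ∈ i.properDivisors) : 2 ≤ i / d := by
  rw [Nat.mem_properDivisors] at hd
  have hd0 : 0 < d := by
    rcases Nat.eq_zero_or_pos d with rfl | h
    · obtain ⟨c, hc⟩ := hd.1; omega
    · exact h
  have hmul : d * (i / d) = i := Nat.mul_div_cancel' hd.1
  rcases Nat.lt_or_ge (i / d) 2 with h | h
  · interval_cases h : i / d <;> omega
  · exact h

open Classical in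
lemma sum_even_quot {i : ℕ} (hi : 2 ≤ i) :
    ∑ d ∈ i.properDivisors, (if 2 ∣ i / d then (PF k d).card else 0) =
    if 2 ∣ i then k ^ (i / 2) else 0 := by
  rw [← Finset.sum_filter]
  by_cases h2 : 2 ∣ i
  · rw [if_pos h2, ← sum_PF_card k (show 1 ≤ i / 2 by omega)]
    congr 1
    apply Finset.ext
    intro d
    rw [Finset.mem_filter, Nat.mem_properDivisors, Nat.mem_divisors]
    constructor
    · rintro ⟨⟨hdvd, hlt⟩, hev⟩
      obtain ⟨m, hm⟩ := hev
      have hmul : d * (i / d) = i := Nat.mul_div_cancel' hdvd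
      have hieq : i = 2 * (d * m) := by rw [← hmul, hm]; ring
      have hhalf : i / 2 = d * m := by rw [hieq, Nat.mul_div_cancel_left _ two_pos]
      exact ⟨⟨m, hhalf⟩, by omega⟩
    · rintro ⟨hdvd2, hne⟩
      obtain ⟨m, hm⟩ := hdvd2
      have hd0 : 0 < d := by
        rcases Nat.eq_zero_or_pos d with rfl | h
        · simp at hm; omega
        · exact h
      have h2i : 2 * (i / 2) = i := Nat.mul_div_cancel' h2
      have hieq : i = d * (2 * m) := by rw [← h2i, hm]; ring
      have hquot : i / d = 2 * m := by
        rw [hieq, Nat.mul_div_cancel_left _ hd0]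
      have hle : d ≤ i / 2 := Nat.le_of_dvd (by omega) ⟨m, hm⟩
      exact ⟨⟨⟨2 * m, hieq⟩, by omega⟩, ⟨m, hquot⟩⟩
  · rw [if_neg h2]
    have hempty : i.properDivisors.filter (fun d => 2 ∣ i / d) = ∅ := by
      apply Finset.eq_empty_of_forall_notMem
      intro d hd
      rw [Finset.mem_filter, Nat.mem_properDivisors] at hd
      obtain ⟨⟨hdvd, hlt⟩, m, hm⟩ := hd
      have hmul : d * (i / d) = i := Nat.mul_div_cancel' hdvd
      have : i = 2 * (d * m) := by rw [← hmul, hm]; ring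
      exact h2 ⟨d * m, this⟩
    rw [hempty, Finset.sum_empty]

open Classical in
/-- The main counting identity over ℕ. -/
lemma main_nat {i : ℕ} (hi : 2 ≤ i) :
    ((PairsF k i).image (Ff k)).card
      + ∑ d ∈ i.properDivisors, ((i / d - 1) / 2) * (PF k d).card
      = (i - 1) * k ^ i := by
  have h1 := two_mul_card_image k (i := i)
  have h2 : (EF k i).card + (QF k i).card = (CF k i).card := by
    have hq : (CF k i).filter (fun p => ¬ p.1 = p.2) = QF k i := by
      rw [CF, QF, Finset.filter_filter]
    rw [← hq, EF]
    exact Finset.card_filter_add_card_filter_not _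
  have h3 := card_CF k (i := i)
  have h4 := card_EF k (show 1 ≤ i by omega)
  have h5 := sum_even_quot k hi
  have h6 : ∑ d ∈ i.properDivisors, (PF k d).card * (i / d - 1)
      = 2 * (∑ d ∈ i.properDivisors, ((i / d - 1) / 2) * (PF k d).card)
        + ∑ d ∈ i.properDivisors, (if 2 ∣ i / d then (PF k d).card else 0) := by
    rw [Finset.mul_sum, ← Finset.sum_add_distrib]
    exact Finset.sum_congr rfl fun d hd => floor_helper _ _ (quot_ge_two hi hd)
  have h7 := card_PairsF k (show 1 ≤ i by omega)
  omega

/-- Möbius inversion for the count of primitive words. -/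
lemma PF_card_int {n : ℕ} (hn : 1 ≤ n) :
    ((PF k n).card : ℤ) =
      ∑ d ∈ n.divisors, (ArithmeticFunction.moebius (n / d)) * (k : ℤ) ^ d := by
  have h := (ArithmeticFunction.sum_eq_iff_sum_smul_moebius_eq (R := ℤ)
      (f := fun m => ((PF k m).card : ℤ)) (g := fun m => (k : ℤ) ^ m)).mp
    (fun m hm => by
      rw [← Nat.cast_pow, ← sum_PF_card k hm]
      push_cast
      rfl) n (by omega)
  rw [← h, ← Nat.sum_divisorsAntidiagonal'
    (f := fun x y => (ArithmeticFunction.moebius x) * (k : ℤ) ^ y)]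
  exact Finset.sum_congr rfl fun x _ => by rw [smul_eq_mul]

end Stmt10

/-- S(i) = (i−1)·k^i − Σ_{d|i, d<i} ⌊(i/d−1)/2⌋·Σ_{d'|d} μ(d/d')·k^{d'},
and consequently |R^SET_n| = 2·Σ_{i=2}^{n} S(i). -/
theorem stmt_10 (k : ℕ) (hk : 2 ≤ k) :
    (∀ i : ℕ, 2 ≤ i →
      (S k i : ℤ) = ((i : ℤ) - 1) * (k : ℤ) ^ i -
        ∑ d ∈ i.properDivisors, (((i / d - 1) / 2 : ℕ) : ℤ) *
          ∑ d' ∈ d.divisors, ArithmeticFunction.moebius (d / d') * (k : ℤ) ^ d') ∧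
    (∀ n : ℕ, RSET k n = 2 * ∑ i ∈ Finset.Icc 2 n, S k i) := by
  constructor
  · intro i hi
    have hS : S k i = ((Stmt10.PairsF k i).image (Stmt10.Ff k)).card := by
      rw [S]; exact Stmt10.S_eq_card_image k i
    have hmain := Stmt10.main_nat (k := k) (i := i) hi
    rw [← hS] at hmain
    have hcast := congrArg (fun n : ℕ => (n : ℤ)) hmain
    simp only [Nat.cast_add, Nat.cast_mul, Nat.cast_sum, Nat.cast_pow] at hcast
    have hisub : ((i - 1 : ℕ) : ℤ) = (i : ℤ) - 1 := by
      rw [Nat.cast_sub (by omega : 1 ≤ i)]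
      simp
    rw [hisub] at hcast
    have hsum : ∑ d ∈ i.properDivisors,
          (((i / d - 1) / 2 : ℕ) : ℤ) * ((Stmt10.PF k d).card : ℤ)
        = ∑ d ∈ i.properDivisors, (((i / d - 1) / 2 : ℕ) : ℤ) *
            ∑ d' ∈ d.divisors, ArithmeticFunction.moebius (d / d') * (k : ℤ) ^ d' := by
      refine Finset.sum_congr rfl fun d hd => ?_
      rw [Stmt10.PF_card_int k (Nat.pos_of_mem_properDivisors hd)]
    rw [← hsum]
    linarith [hcast]
  · intro n
    rfl
end

section
/- Fix an integer k ≥ 2 and an alphabet Σ of k symbols. As n → ∞, |R^SET_n| is asymptotically equivalent to |R^TUPLE_n|; that is, lim_{n→∞} |R^SET_n|/|R^TUPLE_n| = 1. -/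
/-- T(i): the number of ordered triples (u,v,z) of nonempty words with uv = z, |z| = i
(the TUPLE convention). -/
noncomputable def T (k i : ℕ) : ℕ :=
  Set.ncard {t : List (Fin k) × List (Fin k) × List (Fin k) |
    t.1 ≠ [] ∧ t.2.1 ≠ [] ∧ t.1 ++ t.2.1 = t.2.2 ∧ t.2.2.length = i}

/-- |R^TUPLE_n| -/
noncomputable def RTUPLE (k n : ℕ) : ℕ := 2 * ∑ i ∈ Finset.Icc 2 n, T k i

/-- If two words of the same length both commute with a fixed nonempty word `u`,
they are equal. -/
lemma comm_eq_of_length_eq {α : Type*} {u : List α} (hu : u ≠ []) :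
    ∀ n (z₁ z₂ : List α), z₁.length = n → z₂.length = n →
      z₁ ++ u = u ++ z₁ → z₂ ++ u = u ++ z₂ → z₁ = z₂ := by
  intro n
  induction n using Nat.strong_induction_on with
  | _ n ih =>
    intro z₁ z₂ h1 h2 c1 c2
    have hu0 : u.length ≠ 0 := by simpa using hu
    by_cases hlt : n < u.length
    · have e : ∀ z : List α, z.length = n → z ++ u = u ++ z → z = u.take n := by
        intro z hz hc
        have := congrArg (List.take n) hc
        rwa [List.take_left' hz, List.take_append_of_le_length (by omega)] at this
      rw [e z₁ h1 c1, e z₂ h2 c2]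
    · have e : ∀ z : List α, z.length = n → z ++ u = u ++ z →
          z = u ++ z.drop u.length ∧ (z.drop u.length) ++ u = u ++ z.drop u.length := by
        intro z hz hc
        have htake : z.take u.length = u := by
          have := congrArg (List.take u.length) hc
          rwa [List.take_append_of_le_length (by omega), List.take_left] at this
        have hz' : z = u ++ z.drop u.length := by
          conv_lhs => rw [← List.take_append_drop u.length z, htake]
        constructor
        · exact hz'
        · have : (u ++ z.drop u.length) ++ u = u ++ (u ++ z.drop u.length) := by
            rw [← hz']; exact hc
          rw [List.append_assoc] at this
          exact (List.append_cancel_left this)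
      obtain ⟨e1, d1⟩ := e z₁ h1 c1
      obtain ⟨e2, d2⟩ := e z₂ h2 c2
      have key := ih (n - u.length) (by omega) (z₁.drop u.length) (z₂.drop u.length)
        (by simp [h1]) (by simp [h2]) d1 d2
      rw [e1, e2, key]



def Apairs (k i : ℕ) : Set (List (Fin k) × List (Fin k)) :=
  {p | p.1 ≠ [] ∧ p.2 ≠ [] ∧ (p.1 ++ p.2).length = i}

lemma Apairs_finite (k i : ℕ) : (Apairs k i).Finite := by
  apply Set.Finite.subset (Set.Finite.prod (List.finite_length_le (Fin k) i)
    (List.finite_length_le (Fin k) i))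
  rintro ⟨u, v⟩ ⟨-, -, h⟩
  simp only [List.length_append] at h
  exact ⟨by simp; omega, by simp; omega⟩

lemma triple_finite (k i : ℕ) : {t : List (Fin k) × List (Fin k) × List (Fin k) |
    t.1 ≠ [] ∧ t.2.1 ≠ [] ∧ t.1 ++ t.2.1 = t.2.2 ∧ t.2.2.length = i}.Finite := by
  apply Set.Finite.subset (Set.Finite.prod (List.finite_length_le (Fin k) i)
    (Set.Finite.prod (List.finite_length_le (Fin k) i) (List.finite_length_le (Fin k) i)))
  rintro ⟨u, v, z⟩ ⟨-, -, he, hl⟩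
  have : u.length + v.length = i := by
    have := congrArg List.length he; simpa [hl] using this
  exact ⟨by simp; omega, by simp; omega, by simp [hl]⟩

lemma T_eq_ncard_Apairs (k i : ℕ) : T k i = (Apairs k i).ncard := by
  rw [T]
  have himg : (fun t : List (Fin k) × List (Fin k) × List (Fin k) => (t.1, t.2.1)) ''
      {t | t.1 ≠ [] ∧ t.2.1 ≠ [] ∧ t.1 ++ t.2.1 = t.2.2 ∧ t.2.2.length = i} = Apairs k i := by
    ext ⟨u, v⟩
    constructor
    · rintro ⟨⟨u', v', z'⟩, ⟨h1, h2, h3, h4⟩, h5⟩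
      simp only [Prod.mk.injEq] at h5
      simp only at h1 h2 h3 h4
      refine ⟨h5.1 ▸ h1, h5.2 ▸ h2, ?_⟩
      simp only [← h5.1, ← h5.2, h3, h4]
    · rintro ⟨h1, h2, h3⟩
      exact ⟨(u, v, u ++ v), ⟨h1, h2, rfl, h3⟩, rfl⟩
  rw [← himg]
  refine (Set.ncard_image_of_injOn ?_).symm
  rintro ⟨u, v, z⟩ ⟨-, -, h3, -⟩ ⟨u', v', z'⟩ ⟨-, -, h3', -⟩ h
  simp only [Prod.mk.injEq] at h ⊢
  simp only at h3 h3'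
  exact ⟨h.1, h.2, by rw [← h3, ← h3', h.1, h.2]⟩




def fmap (k : ℕ) (p : List (Fin k) × List (Fin k)) : Finset (List (Fin k)) :=
  {p.1, p.2, p.1 ++ p.2}

lemma Sset_eq_image (k i : ℕ) :
    {s : Finset (List (Fin k)) | ∃ u v : List (Fin k),
      u ≠ [] ∧ v ≠ [] ∧ (u ++ v).length = i ∧ s = {u, v, u ++ v}} =
    fmap k '' Apairs k i := by
  ext s
  constructor
  · rintro ⟨u, v, h1, h2, h3, h4⟩
    exact ⟨(u, v), ⟨h1, h2, h3⟩, h4.symm⟩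
  · rintro ⟨⟨u, v⟩, ⟨h1, h2, h3⟩, h4⟩
    exact ⟨u, v, h1, h2, h3, h4.symm⟩

lemma fmap_injOn_good (k i : ℕ) :
    Set.InjOn (fmap k) (Apairs k i ∩ {p | p.1 ++ p.2 ≠ p.2 ++ p.1}) := by
  rintro ⟨u, v⟩ ⟨⟨hu, hv, hl⟩, hg⟩ ⟨u', v'⟩ ⟨⟨hu', hv', hl'⟩, hg'⟩ he
  simp only [ne_eq, Set.mem_setOf_eq] at hu hv hu' hv' hg hg'
  simp only at hl hl'
  -- lengths
  have hul : u.length < i := by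
    have := List.length_pos_iff.2 hv; simp only [List.length_append] at hl; omega
  have hvl : v.length < i := by
    have := List.length_pos_iff.2 hu; simp only [List.length_append] at hl; omega
  have hul' : u'.length < i := by
    have := List.length_pos_iff.2 hv'; simp only [List.length_append] at hl'; omega
  have hvl' : v'.length < i := by
    have := List.length_pos_iff.2 hu'; simp only [List.length_append] at hl'; omega
  have hmem : ∀ x : List (Fin k), x ∈ fmap k (u, v) ↔ x ∈ fmap k (u', v') := by
    intro x; rw [he]
  have hz : u ++ v = u' ++ v' := by
    have := (hmem (u ++ v)).1 (by simp [fmap])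
    simp only [fmap, Finset.mem_insert, Finset.mem_singleton] at this
    rcases this with h | h | h
    · exfalso; have := congrArg List.length h; omega
    · exfalso; have := congrArg List.length h; omega
    · exact h
  have hu'mem := (hmem u').2 (by simp [fmap])
  simp only [fmap, Finset.mem_insert, Finset.mem_singleton] at hu'mem
  have hu'uv : u' = u ∨ u' = v := by
    rcases hu'mem with h | h | h
    · exact Or.inl h
    · exact Or.inr h
    · exfalso; have := congrArg List.length h; simp only [List.length_append] at this hl; omega
  have hv'mem := (hmem v').2 (by simp [fmap])
  simp only [fmap, Finset.mem_insert, Finset.mem_singleton] at hv'mem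
  have hv'uv : v' = u ∨ v' = v := by
    rcases hv'mem with h | h | h
    · exact Or.inl h
    · exact Or.inr h
    · exfalso; have := congrArg List.length h; simp only [List.length_append] at this hl; omega
  have goal : u' = u ∧ v' = v := by
    rcases hu'uv with h | h
    · subst h
      exact ⟨rfl, List.append_cancel_left hz.symm⟩
    · rcases hv'uv with h' | h'
      · exfalso; rw [h, h'] at hz; exact hg hz
      · have huv : u = v := by
          rw [h, h'] at hz
          exact List.append_cancel_right hz
        rw [h, h', huv]; exact ⟨rfl, rfl⟩
  simp [Prod.ext_iff, goal.1, goal.2]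

def Bad (k i : ℕ) : Set (List (Fin k) × List (Fin k)) :=
  Apairs k i ∩ {p | p.1 ++ p.2 = p.2 ++ p.1}

lemma bad_comm {k i : ℕ} {p : List (Fin k) × List (Fin k)} (hp : p ∈ Bad k i) :
    (p.1 ++ p.2).take (min p.1.length (i - p.1.length)) ≠ [] ∧
    (p.1 ++ p.2) ++ (p.1 ++ p.2).take (min p.1.length (i - p.1.length)) =
      (p.1 ++ p.2).take (min p.1.length (i - p.1.length)) ++ (p.1 ++ p.2) := by
  obtain ⟨⟨h1, h2, hl⟩, hc⟩ := hp
  simp only [Set.mem_setOf_eq] at hc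
  have l1 : 1 ≤ p.1.length := List.length_pos_iff.2 h1
  have l2 : 1 ≤ p.2.length := List.length_pos_iff.2 h2
  have hsum : p.1.length + p.2.length = i := by simpa using hl
  by_cases hle : p.1.length ≤ i - p.1.length
  · have hm : min p.1.length (i - p.1.length) = p.1.length := min_eq_left hle
    rw [hm, List.take_left]
    refine ⟨h1, ?_⟩
    rw [List.append_assoc, hc]
  · have hm : min p.1.length (i - p.1.length) = p.2.length := by omega
    rw [hm]
    have htake : (p.1 ++ p.2).take p.2.length = p.2 := by
      rw [hc, List.take_left]
    rw [htake]
    refine ⟨h2, ?_⟩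
    conv_lhs => rw [hc]
    rw [List.append_assoc]

lemma Bad_ncard_le {k i : ℕ} (hk : 0 < k) : (Bad k i).ncard ≤ i * k ^ (i / 2) := by
  have hk' : NeZero k := ⟨by omega⟩
  set g : List (Fin k) × List (Fin k) → ℕ × (Fin (i / 2) → Fin k) :=
    fun p => (p.1.length, fun j => (p.1 ++ p.2).getD j 0) with hg
  have htarget : (↑((Finset.range i) ×ˢ (Finset.univ : Finset (Fin (i / 2) → Fin k))) :
      Set (ℕ × (Fin (i / 2) → Fin k))).ncard = i * k ^ (i / 2) := by
    rw [Set.ncard_coe_finset, Finset.card_product, Finset.card_range, Finset.card_univ]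
    simp
  rw [← htarget]
  apply Set.ncard_le_ncard_of_injOn g
  · rintro ⟨u, v⟩ ⟨⟨h1, h2, hl⟩, -⟩
    simp only [Finset.coe_product, Set.mem_prod, Finset.mem_coe, Finset.mem_range,
      Finset.mem_univ, and_true, g]
    simp only at h1 h2 hl
    have := List.length_pos_iff.2 h2
    simp only [List.length_append] at hl
    omega
  · rintro ⟨u, v⟩ hp ⟨u', v'⟩ hq he
    obtain ⟨⟨h1, h2, hl⟩, hc⟩ := hp
    obtain ⟨⟨h1', h2', hl'⟩, hc'⟩ := hq
    simp only [g, Prod.mk.injEq] at he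
    obtain ⟨ha, hfun⟩ := he
    simp only at ha hl hl' h1 h2 h1' h2'
    have l1 : 1 ≤ u.length := List.length_pos_iff.2 h1
    have l2 : 1 ≤ v.length := List.length_pos_iff.2 h2
    have l2' : 1 ≤ v'.length := List.length_pos_iff.2 h2'
    have hsum : u.length + v.length = i := by simpa using hl
    have hsum' : u'.length + v'.length = i := by simpa using hl'
    set m := min u.length (i - u.length) with hm
    have hmi : m ≤ i / 2 := by omega
    have hmpos : 1 ≤ m := by omega
    -- the two prefixes of length m agree
    have hw : (u ++ v).take m = (u' ++ v').take m := by
      apply List.ext_getElem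
      · simp only [List.length_take, List.length_append]; omega
      · intro j hj hj'
        simp only [List.length_take, List.length_append] at hj
        have hji : j < i / 2 := by omega
        have h1len : j < (u ++ v).length := by simp; omega
        have h2len : j < (u' ++ v').length := by simp; omega
        have := congrFun hfun ⟨j, hji⟩
        simp only [List.getD_eq_getElem _ _ h1len, List.getD_eq_getElem _ _ h2len] at this
        rw [List.getElem_take, List.getElem_take]
        exact this
    -- commutation facts
    have hbc := bad_comm (k := k) (i := i) (p := (u, v)) ⟨⟨h1, h2, hl⟩, hc⟩
    have hbc' := bad_comm (k := k) (i := i) (p := (u', v')) ⟨⟨h1', h2', hl'⟩, hc'⟩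
    simp only [← ha] at hbc'
    rw [← hm] at hbc hbc'
    rw [← hw] at hbc'
    have hz : u ++ v = u' ++ v' :=
      comm_eq_of_length_eq hbc.1 i (u ++ v) (u' ++ v') hl hl' hbc.2 hbc'.2
    have hu : u = u' := by
      have : (u ++ v).take u.length = (u' ++ v').take u'.length := by rw [hz, ha]
      rwa [List.take_left, List.take_left] at this
    have hv : v = v' := by
      have : (u ++ v).drop u.length = (u' ++ v').drop u'.length := by rw [hz, ha]
      rwa [List.drop_left, List.drop_left] at this
    simp [Prod.ext_iff, hu, hv]

lemma S_le_T (k i : ℕ) : S k i ≤ T k i := by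
  rw [S, T_eq_ncard_Apairs, Sset_eq_image]
  exact Set.ncard_image_le (Apairs_finite k i)

lemma T_le_S_add {k : ℕ} (hk : 0 < k) (i : ℕ) : T k i ≤ S k i + i * k ^ (i / 2) := by
  have hsplit : Apairs k i =
      (Apairs k i ∩ {p | p.1 ++ p.2 ≠ p.2 ++ p.1}) ∪ Bad k i := by
    ext p
    simp only [Bad, Set.mem_union, Set.mem_inter_iff, Set.mem_setOf_eq]
    tauto
  have hfinG : (Apairs k i ∩ {p | p.1 ++ p.2 ≠ p.2 ++ p.1}).Finite :=
    (Apairs_finite k i).subset Set.inter_subset_left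
  have hfinB : (Bad k i).Finite := (Apairs_finite k i).subset Set.inter_subset_left
  have h1 : T k i ≤ (Apairs k i ∩ {p | p.1 ++ p.2 ≠ p.2 ++ p.1}).ncard + (Bad k i).ncard := by
    have := Set.ncard_union_le (Apairs k i ∩ {p | p.1 ++ p.2 ≠ p.2 ++ p.1}) (Bad k i)
    rw [← hsplit] at this
    rw [T_eq_ncard_Apairs]
    exact this
  have h2 : (Apairs k i ∩ {p | p.1 ++ p.2 ≠ p.2 ++ p.1}).ncard ≤ S k i := by
    rw [← Set.ncard_image_of_injOn (fmap_injOn_good k i), S, Sset_eq_image]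
    exact Set.ncard_le_ncard (Set.image_mono Set.inter_subset_left)
      ((Apairs_finite k i).image _)
  calc T k i ≤ _ + (Bad k i).ncard := h1
    _ ≤ S k i + i * k ^ (i / 2) := Nat.add_le_add h2 (Bad_ncard_le hk)

lemma pow_le_T {k : ℕ} (i : ℕ) (hi : 2 ≤ i) : k ^ i ≤ T k i := by
  classical
  have : (Set.univ : Set (Fin i → Fin k)).ncard ≤ T k i := by
    unfold T
    have hfin : {t : List (Fin k) × List (Fin k) × List (Fin k) |
        t.1 ≠ [] ∧ t.2.1 ≠ [] ∧ t.1 ++ t.2.1 = t.2.2 ∧ t.2.2.length = i}.Finite :=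
      Set.Finite.subset (Set.Finite.prod (List.finite_length_le (Fin k) i)
        (Set.Finite.prod (List.finite_length_le (Fin k) i) (List.finite_length_le (Fin k) i)))
        (by
          rintro ⟨u, v, z⟩ ⟨-, -, he, hl⟩
          have : u.length + v.length = i := by
            have := congrArg List.length he; simpa [hl] using this
          exact ⟨by simp; omega, by simp; omega, by simp [hl]⟩)
    refine Set.ncard_le_ncard_of_injOn
      (fun g => ((List.ofFn g).take 1, (List.ofFn g).drop 1, List.ofFn g)) ?_ ?_ hfin
    · rintro g -
      refine ⟨?_, ?_, List.take_append_drop 1 _, by simp⟩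
      · simp [← List.length_pos_iff]; omega
      · simp [← List.length_pos_iff]; omega
    · rintro g - g' - h
      simp only [Prod.mk.injEq] at h
      exact List.ofFn_injective h.2.2
  calc k ^ i = (Set.univ : Set (Fin i → Fin k)).ncard := by
        rw [Set.ncard_univ, Nat.card_eq_fintype_card]; simp
    _ ≤ T k i := this

theorem stmt_12 (k : ℕ) (hk : 2 ≤ k) :
    Filter.Tendsto (fun n : ℕ => (RSET k n : ℝ) / (RTUPLE k n : ℝ))
      Filter.atTop (nhds 1) := by
  have hk0 : 0 < k := by omega
  have hk1R : (1:ℝ) < (k:ℝ) := by exact_mod_cast (by omega : (1:ℕ) < k)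
  -- nat-level inequalities
  have hAB : ∀ n, RSET k n ≤ RTUPLE k n := fun n => by
    unfold RSET RTUPLE
    exact Nat.mul_le_mul_left 2 (Finset.sum_le_sum fun i _ => S_le_T k i)
  have hBA : ∀ n, RTUPLE k n ≤ RSET k n + 2 * (n ^ 2 * k ^ (n / 2)) := fun n => by
    unfold RSET RTUPLE
    have h1 : ∑ i ∈ Finset.Icc 2 n, T k i ≤
        ∑ i ∈ Finset.Icc 2 n, (S k i + i * k ^ (i / 2)) :=
      Finset.sum_le_sum fun i _ => T_le_S_add hk0 i
    rw [Finset.sum_add_distrib] at h1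
    have h2 : ∑ i ∈ Finset.Icc 2 n, i * k ^ (i / 2) ≤ n ^ 2 * k ^ (n / 2) := by
      calc ∑ i ∈ Finset.Icc 2 n, i * k ^ (i / 2)
          ≤ (Finset.Icc 2 n).card • (n * k ^ (n / 2)) := by
            apply Finset.sum_le_card_nsmul
            intro i hi
            simp only [Finset.mem_Icc] at hi
            exact Nat.mul_le_mul hi.2 (Nat.pow_le_pow_right hk0 (by omega))
        _ ≤ n * (n * k ^ (n / 2)) := by
            simp only [smul_eq_mul, Nat.card_Icc]
            exact Nat.mul_le_mul_right _ (by omega)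
        _ = n ^ 2 * k ^ (n / 2) := by ring
    omega
  have hB : ∀ n, 2 ≤ n → 2 * k ^ n ≤ RTUPLE k n := fun n hn => by
    unfold RTUPLE
    refine Nat.mul_le_mul_left 2 ?_
    calc k ^ n ≤ T k n := pow_le_T n hn
      _ ≤ ∑ i ∈ Finset.Icc 2 n, T k i :=
        Finset.single_le_sum (fun i _ => Nat.zero_le _) (by simp [Finset.mem_Icc]; omega)
  -- real part
  set r : ℝ := (Real.sqrt k)⁻¹ with hrdef
  have hsq1 : 1 < Real.sqrt k := by
    rw [show (1:ℝ) = Real.sqrt 1 by simp]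
    exact Real.sqrt_lt_sqrt (by norm_num) hk1R
  have hsq0 : 0 < Real.sqrt k := by positivity
  have hr0 : 0 ≤ r := by positivity
  have hr1 : r < 1 := inv_lt_one_of_one_lt₀ hsq1
  have hL : Filter.Tendsto (fun n : ℕ => 1 - (n:ℝ)^2 * r^n) Filter.atTop (nhds 1) := by
    have := (tendsto_const_nhds (x := (1:ℝ)) (f := Filter.atTop (α := ℕ))).sub
      (tendsto_pow_const_mul_const_pow_of_lt_one 2 hr0 hr1)
    simpa using this
  apply tendsto_of_tendsto_of_tendsto_of_le_of_le' hL tendsto_const_nhds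
  · -- lower bound eventually
    filter_upwards [Filter.eventually_ge_atTop 2] with n hn
    have hBpos : (0:ℝ) < (RTUPLE k n : ℝ) := by
      have := hB n hn
      have : (0:ℕ) < RTUPLE k n := lt_of_lt_of_le (by positivity) this
      exact_mod_cast this
    have hApos : (0:ℝ) ≤ (RSET k n : ℝ) := by positivity
    have hcast : (RTUPLE k n : ℝ) ≤ (RSET k n : ℝ) + 2 * ((n:ℝ)^2 * (k:ℝ)^(n/2)) := by
      have := hBA n; exact_mod_cast this
    have hkn : (0:ℝ) < 2 * (k:ℝ)^n := by positivity
    have hknB : 2 * (k:ℝ)^n ≤ (RTUPLE k n : ℝ) := by exact_mod_cast hB n hn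
    have hE0 : (0:ℝ) ≤ 2 * ((n:ℝ)^2 * (k:ℝ)^(n/2)) := by positivity
    -- E / B ≤ n^2 * r^n
    have key : 2 * ((n:ℝ)^2 * (k:ℝ)^(n/2)) / (RTUPLE k n : ℝ) ≤ (n:ℝ)^2 * r^n := by
      have step1 : 2 * ((n:ℝ)^2 * (k:ℝ)^(n/2)) / (RTUPLE k n : ℝ) ≤
          2 * ((n:ℝ)^2 * (k:ℝ)^(n/2)) / (2 * (k:ℝ)^n) :=
        div_le_div_of_nonneg_left hE0 hkn hknB
      have hpow : (k:ℝ)^n = (k:ℝ)^(n/2) * (k:ℝ)^(n - n/2) := by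
        rw [← pow_add]; congr 1; omega
      have step2 : 2 * ((n:ℝ)^2 * (k:ℝ)^(n/2)) / (2 * (k:ℝ)^n) =
          (n:ℝ)^2 / (k:ℝ)^(n - n/2) := by
        rw [hpow]
        have h1 : (0:ℝ) < (k:ℝ)^(n/2) := by positivity
        have h2 : (0:ℝ) < (k:ℝ)^(n - n/2) := by positivity
        field_simp
      have hsqpow : (Real.sqrt k)^n ≤ (k:ℝ)^(n - n/2) := by
        calc (Real.sqrt k)^n ≤ (Real.sqrt k)^(2 * (n - n/2)) :=
              pow_le_pow_right₀ (le_of_lt hsq1) (by omega)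
          _ = ((Real.sqrt k)^2)^(n - n/2) := by rw [pow_mul]
          _ = (k:ℝ)^(n - n/2) := by rw [Real.sq_sqrt (by positivity)]
      have step3 : (n:ℝ)^2 / (k:ℝ)^(n - n/2) ≤ (n:ℝ)^2 / (Real.sqrt k)^n :=
        div_le_div_of_nonneg_left (by positivity) (by positivity) hsqpow
      have step4 : (n:ℝ)^2 / (Real.sqrt k)^n = (n:ℝ)^2 * r^n := by
        rw [hrdef, inv_pow, div_eq_mul_inv]
      calc 2 * ((n:ℝ)^2 * (k:ℝ)^(n/2)) / (RTUPLE k n : ℝ) ≤ _ := step1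
        _ = (n:ℝ)^2 / (k:ℝ)^(n - n/2) := step2
        _ ≤ (n:ℝ)^2 / (Real.sqrt k)^n := step3
        _ = (n:ℝ)^2 * r^n := step4
    -- conclude
    have hdiv : 1 - 2 * ((n:ℝ)^2 * (k:ℝ)^(n/2)) / (RTUPLE k n : ℝ) ≤
        (RSET k n : ℝ) / (RTUPLE k n : ℝ) := by
      have h1 : ((RTUPLE k n : ℝ) - 2 * ((n:ℝ)^2 * (k:ℝ)^(n/2))) / (RTUPLE k n : ℝ) ≤
          (RSET k n : ℝ) / (RTUPLE k n : ℝ) :=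
        (div_le_div_iff_of_pos_right hBpos).mpr (by linarith)
      calc 1 - 2 * ((n:ℝ)^2 * (k:ℝ)^(n/2)) / (RTUPLE k n : ℝ)
          = ((RTUPLE k n : ℝ) - 2 * ((n:ℝ)^2 * (k:ℝ)^(n/2))) / (RTUPLE k n : ℝ) := by
            rw [sub_div, div_self hBpos.ne']
        _ ≤ _ := h1
    calc 1 - (n:ℝ)^2 * r^n ≤ 1 - 2 * ((n:ℝ)^2 * (k:ℝ)^(n/2)) / (RTUPLE k n : ℝ) := by linarith
      _ ≤ _ := hdiv
  · -- upper bound eventually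
    filter_upwards [Filter.eventually_ge_atTop 2] with n hn
    have hBpos : (0:ℝ) < (RTUPLE k n : ℝ) := by
      have h := hB n hn
      have : (0:ℕ) < RTUPLE k n := lt_of_lt_of_le (by positivity) h
      exact_mod_cast this
    rw [div_le_one hBpos]
    exact_mod_cast hAB n
end

section
/- Fix an integer k ≥ 2 and an alphabet Σ of k symbols, and let r be a positive integer. Then N_{r,r}, the number of pairs ({ū, v̄}, z̄) where {ū, v̄} is an unordered (possibly equal) pair of non-oriented polymers of length r and z̄ is the equivalence class of u'v' for some representatives u' ∈ {u, u⁻} and v' ∈ {v, v⁻}, equals 2·n̄_r·(n̄_r − 1) + 3·n̄_r + 2·n̄_r·p̄_r + p̄_r·(p̄_r + 1)/2, where p̄_r and n̄_r denote the numbers of non-oriented polymers of length r that are palindromic and non-palindromic, respectively. -/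
/-- The non-oriented polymer (equivalence class under reversal) of a word w,
represented as the finset {w, w.reverse}. -/
noncomputable def cls {k : ℕ} (w : List (Fin k)) : Finset (List (Fin k)) := {w, w.reverse}

/-- p̄_m: the number of non-oriented polymers of length m whose members are palindromic. -/
noncomputable def pbar (k m : ℕ) : ℕ :=
  Set.ncard {s : Finset (List (Fin k)) |
    ∃ w : List (Fin k), w.length = m ∧ w.reverse = w ∧ s = cls w}

/-- n̄_m: the number of non-oriented polymers of length m whose members are non-palindromic. -/
noncomputable def nbar (k m : ℕ) : ℕ :=
  Set.ncard {s : Finset (List (Fin k)) |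
    ∃ w : List (Fin k), w.length = m ∧ w.reverse ≠ w ∧ s = cls w}

/-- N_{r,r}: the number of pairs ({ū, v̄}, z̄) where {ū, v̄} is an unordered (possibly
equal) pair of non-oriented polymers of length r and z̄ is the class of u'v' for some
representatives u' ∈ ū, v' ∈ v̄. -/
noncomputable def Ndiag (k r : ℕ) : ℕ :=
  Set.ncard {t : Sym2 (Finset (List (Fin k))) × Finset (List (Fin k)) |
    ∃ u v : List (Fin k), u.length = r ∧ v.length = r ∧ t.1 = s(cls u, cls v) ∧
      ∃ u' ∈ cls u, ∃ v' ∈ cls v, t.2 = cls (u' ++ v')}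

namespace Stmt18

lemma mem_cls {k : ℕ} {w v : List (Fin k)} : v ∈ cls w ↔ v = w ∨ v = w.reverse := by
  simp [cls]

lemma self_mem_cls {k : ℕ} (w : List (Fin k)) : w ∈ cls w := mem_cls.2 (Or.inl rfl)

lemma cls_reverse {k : ℕ} (w : List (Fin k)) : cls w.reverse = cls w := by
  simp only [cls, List.reverse_reverse]; exact Finset.pair_comm _ _

lemma cls_eq_cls {k : ℕ} {v w : List (Fin k)} (h : v = w ∨ v = w.reverse) : cls v = cls w := by
  rcases h with rfl | rfl
  · rfl
  · exact cls_reverse w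

lemma cls_eq_iff {k : ℕ} {v w : List (Fin k)} : cls v = cls w ↔ v = w ∨ v = w.reverse := by
  constructor
  · intro h
    have : v ∈ cls w := h ▸ self_mem_cls v
    exact mem_cls.1 this
  · exact cls_eq_cls

lemma length_of_mem_cls {k : ℕ} {w v : List (Fin k)} (h : v ∈ cls w) : v.length = w.length := by
  rcases mem_cls.1 h with rfl | rfl <;> simp

/-- The finset of words of length r. -/
noncomputable def words (k r : ℕ) : Finset (List (Fin k)) :=
  (Finset.univ : Finset (Fin r → Fin k)).image List.ofFn

lemma mem_words {k r : ℕ} {w : List (Fin k)} : w ∈ words k r ↔ w.length = r := by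
  constructor
  · intro h
    rcases Finset.mem_image.1 h with ⟨f, -, rfl⟩
    simp
  · intro h
    subst h
    exact Finset.mem_image.2 ⟨w.get, Finset.mem_univ _, List.ofFn_get w⟩

lemma card_words (k r : ℕ) : (words k r).card = k ^ r := by
  rw [words, Finset.card_image_of_injective _ List.ofFn_injective]
  simp

/-- The combined ligation map. -/
noncomputable def Ψ {k : ℕ} (p : List (Fin k) × List (Fin k)) :
    Sym2 (Finset (List (Fin k))) × Finset (List (Fin k)) :=
  (s(cls p.1, cls p.2), cls (p.1 ++ p.2))

lemma psi_swap {k : ℕ} (u v : List (Fin k)) : Ψ (v.reverse, u.reverse) = Ψ (u, v) := by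
  unfold Ψ
  simp only [Prod.mk.injEq]
  constructor
  · rw [cls_reverse, cls_reverse]; exact Sym2.eq_swap
  · rw [← List.reverse_append]; exact cls_reverse _

lemma psi_fiber {k r : ℕ} {u v u' v' : List (Fin k)} (hu : u.length = r) (hv : v.length = r)
    (hu' : u'.length = r) (hv' : v'.length = r) :
    Ψ (u', v') = Ψ (u, v) ↔ (u' = u ∧ v' = v) ∨ (u' = v.reverse ∧ v' = u.reverse) := by
  constructor
  · intro h
    have h2 : cls (u' ++ v') = cls (u ++ v) := congrArg Prod.snd h
    rcases cls_eq_iff.1 h2 with heq | heq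
    · exact Or.inl (List.append_inj heq (by rw [hu', hu]))
    · rw [List.reverse_append] at heq
      exact Or.inr (List.append_inj heq (by rw [hu']; simp [hv]))
  · rintro (⟨rfl, rfl⟩ | ⟨rfl, rfl⟩)
    · rfl
    · exact psi_swap u v

/-- pbar equals the number of palindromic words of length m. -/
lemma pbar_eq (k m : ℕ) :
    pbar k m = ((words k m).filter (fun w => w.reverse = w)).card := by
  classical
  have hset : {s : Finset (List (Fin k)) |
      ∃ w : List (Fin k), w.length = m ∧ w.reverse = w ∧ s = cls w} =
      ↑(((words k m).filter (fun w => w.reverse = w)).image cls) := by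
    ext s
    simp only [Set.mem_setOf_eq, Finset.coe_image, Set.mem_image, Finset.mem_coe,
      Finset.mem_filter, mem_words]
    constructor
    · rintro ⟨w, h1, h2, rfl⟩
      exact ⟨w, ⟨h1, h2⟩, rfl⟩
    · rintro ⟨w, ⟨h1, h2⟩, rfl⟩
      exact ⟨w, h1, h2, rfl⟩
  rw [pbar, hset, Set.ncard_coe_finset]
  apply Finset.card_image_of_injOn
  intro a ha b hb hab
  simp only [Finset.coe_filter, Set.mem_setOf_eq, mem_words] at ha hb
  rcases cls_eq_iff.1 hab with h | h
  · exact h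
  · rw [h, hb.2]

/-- 2 * nbar equals the number of non-palindromic words of length m. -/
lemma nbar_eq (k m : ℕ) :
    2 * nbar k m = ((words k m).filter (fun w => ¬ w.reverse = w)).card := by
  classical
  set N := (words k m).filter (fun w => ¬ w.reverse = w) with hN
  have hset : {s : Finset (List (Fin k)) |
      ∃ w : List (Fin k), w.length = m ∧ w.reverse ≠ w ∧ s = cls w} = ↑(N.image cls) := by
    ext s
    simp only [hN, Set.mem_setOf_eq, Finset.coe_image, Set.mem_image, Finset.mem_coe,
      Finset.mem_filter, mem_words]
    constructor
    · rintro ⟨w, h1, h2, rfl⟩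
      exact ⟨w, ⟨h1, h2⟩, rfl⟩
    · rintro ⟨w, ⟨h1, h2⟩, rfl⟩
      exact ⟨w, h1, h2, rfl⟩
  rw [nbar, hset, Set.ncard_coe_finset]
  have hcard : N.card = ∑ s ∈ N.image cls, (N.filter (fun w => cls w = s)).card :=
    Finset.card_eq_sum_card_fiberwise (fun x hx => Finset.mem_image_of_mem _ hx)
  have hfib : ∀ s ∈ N.image cls, (N.filter (fun w => cls w = s)).card = 2 := by
    intro s hs
    rcases Finset.mem_image.1 hs with ⟨w, hw, rfl⟩
    simp only [hN, Finset.mem_filter, mem_words] at hw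
    have hfil : N.filter (fun x => cls x = cls w) = {w, w.reverse} := by
      ext x
      simp only [Finset.mem_filter, Finset.mem_insert, Finset.mem_singleton, hN, mem_words]
      constructor
      · rintro ⟨-, hx⟩
        exact cls_eq_iff.1 hx
      · rintro (rfl | rfl)
        · exact ⟨⟨hw.1, hw.2⟩, rfl⟩
        · exact ⟨⟨by simp [hw.1], by simp only [List.reverse_reverse]; exact fun h => hw.2 h.symm⟩, cls_reverse w⟩
    rw [hfil, Finset.card_insert_of_notMem
      (by simp only [Finset.mem_singleton]; exact fun h => hw.2 h.symm), Finset.card_singleton]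
  rw [hcard, Finset.sum_congr rfl hfib, Finset.sum_const, smul_eq_mul, mul_comm]

lemma key_count (k m : ℕ) : pbar k m + 2 * nbar k m = k ^ m := by
  classical
  rw [pbar_eq, nbar_eq, Finset.card_filter_add_card_filter_not
    (fun w : List (Fin k) => w.reverse = w), card_words]

/-- 2·Ndiag = k^{2r} + k^r. -/
lemma ndiag_eq (k r : ℕ) : 2 * Ndiag k r = k ^ r * k ^ r + k ^ r := by
  classical
  set W := words k r with hW
  set WW := W ×ˢ W with hWW
  set D := W.image (fun u => (u, u.reverse)) with hD
  set E := WW \ D with hE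
  have memWW : ∀ {p : List (Fin k) × List (Fin k)},
      p ∈ WW ↔ p.1.length = r ∧ p.2.length = r := by
    intro p
    rw [hWW, Finset.mem_product, hW, mem_words, mem_words]
  have memD : ∀ {p : List (Fin k) × List (Fin k)},
      p ∈ D ↔ p.1.length = r ∧ p.2 = p.1.reverse := by
    intro p
    constructor
    · intro hp
      rcases Finset.mem_image.1 hp with ⟨u, hu, rfl⟩
      exact ⟨mem_words.1 hu, rfl⟩
    · intro ⟨h1, h2⟩
      exact Finset.mem_image.2 ⟨p.1, mem_words.2 h1,
        by rw [← h2]⟩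
  have hDsub : D ⊆ WW := by
    intro p hp
    obtain ⟨h1, h2⟩ := memD.1 hp
    exact memWW.2 ⟨h1, by rw [h2]; simp [h1]⟩
  -- identify the Ndiag set with the image of Ψ over WW
  have hset : {t : Sym2 (Finset (List (Fin k))) × Finset (List (Fin k)) |
      ∃ u v : List (Fin k), u.length = r ∧ v.length = r ∧ t.1 = s(cls u, cls v) ∧
        ∃ u' ∈ cls u, ∃ v' ∈ cls v, t.2 = cls (u' ++ v')} = ↑(WW.image Ψ) := by
    ext t
    simp only [Set.mem_setOf_eq, Finset.coe_image, Set.mem_image, Finset.mem_coe]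
    constructor
    · rintro ⟨u, v, hu, hv, ht1, u', hu', v', hv', ht2⟩
      refine ⟨(u', v'), memWW.2 ⟨by rw [length_of_mem_cls hu', hu],
        by rw [length_of_mem_cls hv', hv]⟩, ?_⟩
      have e1 : cls u' = cls u := cls_eq_cls (mem_cls.1 hu')
      have e2 : cls v' = cls v := cls_eq_cls (mem_cls.1 hv')
      rw [Ψ]
      apply Prod.ext
      · simp only [e1, e2]; exact ht1.symm
      · exact ht2.symm
    · rintro ⟨⟨u, v⟩, hp, rfl⟩
      have h := memWW.1 hp
      exact ⟨u, v, h.1, h.2, rfl, u, self_mem_cls u, v, self_mem_cls v, rfl⟩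
  rw [Ndiag, hset, Set.ncard_coe_finset]
  -- split the image into the diagonal part and the rest
  have hsplit : WW.image Ψ = D.image Ψ ∪ E.image Ψ := by
    rw [hE, ← Finset.image_union, Finset.union_sdiff_of_subset hDsub]
  have hdisj : Disjoint (D.image Ψ) (E.image Ψ) := by
    rw [Finset.disjoint_left]
    rintro t ht1 ht2
    rcases Finset.mem_image.1 ht1 with ⟨⟨u, u2⟩, hu, rfl⟩
    rcases Finset.mem_image.1 ht2 with ⟨⟨a, b⟩, hab, heq⟩
    obtain ⟨hul, hu2⟩ := memD.1 hu
    simp only at hul hu2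
    subst hu2
    have habWW := memWW.1 (Finset.mem_sdiff.1 hab).1
    have habD := (Finset.mem_sdiff.1 hab).2
    rcases (psi_fiber hul (by simp [hul]) habWW.1 habWW.2).1 heq with ⟨h1, h2⟩ | ⟨h1, h2⟩
    · exact habD (memD.2 ⟨habWW.1, by rw [h1, h2]⟩)
    · rw [List.reverse_reverse] at h1
      exact habD (memD.2 ⟨habWW.1, by rw [h1, h2]⟩)
  have hcardD : (D.image Ψ).card = k ^ r := by
    have hinj : Set.InjOn Ψ (↑D : Set (List (Fin k) × List (Fin k))) := by
      rintro ⟨a, b⟩ hp ⟨c, d⟩ hq h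
      rw [Finset.mem_coe] at hp hq
      obtain ⟨ha, hb⟩ := memD.1 hp
      obtain ⟨hc, hd⟩ := memD.1 hq
      simp only at ha hb hc hd
      subst hb; subst hd
      rcases (psi_fiber hc (by simp [hc]) ha (by simp [ha])).1 h with ⟨h1, h2⟩ | ⟨h1, h2⟩
      · rw [h1]
      · rw [List.reverse_reverse] at h1
        rw [h1]
    rw [Finset.card_image_of_injOn hinj, hD,
      Finset.card_image_of_injOn (fun a _ b _ h => congrArg Prod.fst h), hW, card_words]
  have hcardE : E.card = 2 * (E.image Ψ).card := by
    have hcard : E.card = ∑ t ∈ E.image Ψ, (E.filter (fun p => Ψ p = t)).card :=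
      Finset.card_eq_sum_card_fiberwise (fun x hx => Finset.mem_image_of_mem _ hx)
    have hfib : ∀ t ∈ E.image Ψ, (E.filter (fun p => Ψ p = t)).card = 2 := by
      intro t ht
      rcases Finset.mem_image.1 ht with ⟨⟨u, v⟩, huv, rfl⟩
      have huvWW := memWW.1 (Finset.mem_sdiff.1 huv).1
      have huvD := (Finset.mem_sdiff.1 huv).2
      have hfil : E.filter (fun p => Ψ p = Ψ (u, v)) = {(u, v), (v.reverse, u.reverse)} := by
        ext ⟨a, b⟩
        simp only [Finset.mem_filter, Finset.mem_insert, Finset.mem_singleton, Prod.mk.injEq]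
        constructor
        · rintro ⟨hab, habeq⟩
          have habWW := memWW.1 (Finset.mem_sdiff.1 hab).1
          exact (psi_fiber huvWW.1 huvWW.2 habWW.1 habWW.2).1 habeq
        · rintro (⟨rfl, rfl⟩ | ⟨rfl, rfl⟩)
          · exact ⟨huv, rfl⟩
          · refine ⟨Finset.mem_sdiff.2 ⟨memWW.2 ⟨by simp [huvWW.2], by simp [huvWW.1]⟩, ?_⟩,
              psi_swap u v⟩
            intro hmem
            obtain ⟨-, h2⟩ := memD.1 hmem
            simp only [List.reverse_reverse] at h2
            exact huvD (memD.2 ⟨huvWW.1, h2.symm⟩)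
      rw [hfil]
      have hne : ((u, v) : List (Fin k) × List (Fin k)) ≠ (v.reverse, u.reverse) := by
        intro h
        obtain ⟨h1, h2⟩ := Prod.mk.injEq .. ▸ h
        exact huvD (memD.2 ⟨huvWW.1, by rw [← h2]⟩)
      rw [Finset.card_insert_of_notMem (by simpa using hne), Finset.card_singleton]
    rw [hcard, Finset.sum_congr rfl hfib, Finset.sum_const, smul_eq_mul, mul_comm]
  have hcardWW : WW.card = k ^ r * k ^ r := by
    rw [hWW, Finset.card_product, hW, card_words]
  have hcardDfin : D.card = k ^ r := by
    rw [hD, Finset.card_image_of_injOn (fun a _ b _ h => congrArg Prod.fst h), hW, card_words]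
  have hE2 : E.card = k ^ r * k ^ r - k ^ r := by
    rw [hE, Finset.card_sdiff_of_subset hDsub, hcardWW, hcardDfin]
  have hle : k ^ r ≤ k ^ r * k ^ r := by
    rcases Nat.eq_zero_or_pos (k ^ r) with h | h
    · simp [h]
    · exact Nat.le_mul_of_pos_left _ h
  rw [hsplit, Finset.card_union_of_disjoint hdisj, hcardD]
  omega

end Stmt18

/-- N_{r,r} = 2·n̄_r·(n̄_r − 1) + 3·n̄_r + 2·n̄_r·p̄_r + p̄_r·(p̄_r + 1)/2. -/
theorem stmt_18 (k : ℕ) (hk : 2 ≤ k) (r : ℕ) (hr : 0 < r) :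
    Ndiag k r =
      2 * nbar k r * (nbar k r - 1) + 3 * nbar k r + 2 * nbar k r * pbar k r +
        pbar k r * (pbar k r + 1) / 2 := by
  have hkc := Stmt18.key_count k r
  have hN := Stmt18.ndiag_eq k r
  set p := pbar k r with hp
  set n := nbar k r with hn
  obtain ⟨d, hd⟩ := Nat.even_mul_succ_self p
  have hdiv : p * (p + 1) / 2 = d := by rw [hd]; omega
  rw [hdiv]
  rw [← hkc] at hN
  have hnn : n * (n - 1) + n = n * n := by
    cases n with
    | zero => simp
    | succ m => simp only [Nat.succ_sub_one]; ring
  have h1 : 2 * (2 * n * (n - 1) + 3 * n + 2 * n * p + d) =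
      4 * (n * (n - 1) + n) + 2 * n + 4 * (n * p) + (d + d) := by ring
  rw [hnn, ← hd] at h1
  have h2 : 4 * (n * n) + 2 * n + 4 * (n * p) + p * (p + 1) =
      (p + 2 * n) * (p + 2 * n) + (p + 2 * n) := by ring
  rw [h2] at h1
  omega
end
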